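/- arXiv:2409.13515 — 7 statements merged into one kernel-verified Lean document; each statement's English description precedes it below -/
import Mathlib

section
/- Let p be an odd prime, ℘ an odd prime distinct from p, m ≥ 1, with p a primitive root modulo ℘^m. Let q = p^{φ(℘^m)} and let ξ ∈ 𝔽_q be a primitive ℘^m-th root of unity. Then for any nonnegative integer j: Tr_{𝔽_q/𝔽_p}(ξ^j) = (℘−1)℘^{m−1} if ℘^m ∣ j; Tr(ξ^j) = −℘^{m−1} if ℘^{m−1} ∣ j but ℘^m ∤ j; and Tr(ξ^j) = 0 otherwise. -/
open Finset

/-- Sum over a finite group generated by `g` equals sum over powers of `g`. -/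
lemma aux_sum_over_group {G M : Type*} [Group G] [Fintype G] [AddCommMonoid M]
    (g : G) (hg : orderOf g = Fintype.card G) (f : G → M) :
    ∑ i ∈ Finset.range (Fintype.card G), f (g ^ i) = ∑ x : G, f x := by
  have hbij : Function.Bijective (fun i : Fin (Fintype.card G) => g ^ (i : ℕ)) := by
    rw [Fintype.bijective_iff_injective_and_card]
    refine ⟨fun a b hab => ?_, by simp⟩
    exact Fin.ext (pow_injOn_Iio_orderOf (by rw [hg]; exact a.2) (by rw [hg]; exact b.2) hab)
  rw [← Fin.sum_univ_eq_sum_range (fun i => f (g ^ i))]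
  exact Fintype.sum_bijective _ hbij _ f (fun i => rfl)

lemma aux_geom_sum {F : Type*} [Field F] [DecidableEq F] (w : F) (M : ℕ) (hM : w ^ M = 1) :
    ∑ t ∈ Finset.range M, w ^ t = if w = 1 then (M : F) else 0 := by
  split_ifs with h
  · simp [h]
  · rw [geom_sum_eq h, hM, sub_self, zero_div]

theorem stmt_6 (p ℘ : ℕ) (hp : p.Prime) (h℘ : ℘.Prime) (hpodd : Odd p) (h℘odd : Odd ℘)
    (hne : p ≠ ℘) (m : ℕ) (hm : 1 ≤ m)
    (hprim : orderOf (p : ZMod (℘ ^ m)) = (℘ ^ m).totient)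
    (F : Type*) [Field F] [Fintype F] [Algebra (ZMod p) F]
    (hcard : Fintype.card F = p ^ (℘ ^ m).totient)
    (ξ : F) (hξ : IsPrimitiveRoot ξ (℘ ^ m)) (j : ℕ) :
    Algebra.trace (ZMod p) F (ξ ^ j) =
      if ℘ ^ m ∣ j then (((℘ - 1) * ℘ ^ (m - 1) : ℕ) : ZMod p)
      else if ℘ ^ (m - 1) ∣ j then -((℘ ^ (m - 1) : ℕ) : ZMod p)
      else 0 := by
  haveI : Fact p.Prime := ⟨hp⟩
  haveI : Fact ℘.Prime := ⟨h℘⟩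
  set N := ℘ ^ m with hN
  set n := N.totient with hn
  have hN0 : N ≠ 0 := pow_ne_zero _ h℘.pos.ne'
  haveI : NeZero N := ⟨hN0⟩
  have hn0 : 0 < n := Nat.totient_pos.mpr (Nat.pos_of_ne_zero hN0)
  have halg_inj : Function.Injective (algebraMap (ZMod p) F) :=
    (algebraMap (ZMod p) F).injective
  haveI hchar : CharP F p := charP_of_injective_algebraMap halg_inj p
  -- finrank
  have hfin : Module.finrank (ZMod p) F = n := by
    have h1 : Fintype.card F = Fintype.card (ZMod p) ^ Module.finrank (ZMod p) F :=
      Module.card_eq_pow_finrank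
    rw [ZMod.card, hcard] at h1
    exact (Nat.pow_right_injective hp.two_le h1).symm
  -- Frobenius as an AlgEquiv
  have hfrcomm : ∀ c : ZMod p, frobenius F p (algebraMap (ZMod p) F c) = algebraMap (ZMod p) F c := by
    intro c
    rw [frobenius_def, ← map_pow, ZMod.pow_card]
  let fr : F →ₐ[ZMod p] F := { frobenius F p with commutes' := hfrcomm }
  have hfr_bij : Function.Bijective fr :=
    (Finite.injective_iff_bijective).mp (frobenius F p).injective
  let g : F ≃ₐ[ZMod p] F := AlgEquiv.ofBijective fr hfr_bij
  have hg_apply : ∀ x : F, g x = x ^ p := fun x => rfl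
  have hgpow : ∀ (i : ℕ) (x : F), (g ^ i) x = x ^ (p ^ i) := by
    intro i
    induction i with
    | zero => intro x; simp
    | succ i ih =>
      intro x
      rw [pow_succ, AlgEquiv.mul_apply, hg_apply, ih, ← pow_mul, pow_succ, Nat.mul_comm p (p ^ i)]
  -- order of Frobenius
  have hord : orderOf g = n := by
    have hgn : g ^ n = 1 := by
      ext x
      rw [hgpow, AlgEquiv.one_apply, ← hcard]
      exact FiniteField.pow_card x
    have h1 : orderOf g ∣ n := orderOf_dvd_of_pow_eq_one hgn
    have h2 : n ≤ orderOf g := by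
      classical
      set d := orderOf g with hd
      have hd0 : 0 < d := (isOfFinOrder_iff_pow_eq_one.mpr ⟨n, hn0, hgn⟩).orderOf_pos
      have hfix : ∀ x : F, x ^ (p ^ d) = x := by
        intro x
        have := congrArg (fun σ : F ≃ₐ[ZMod p] F => σ x) (pow_orderOf_eq_one g)
        simp only [hgpow, AlgEquiv.one_apply] at this
        exact this
      obtain ⟨ζ, hζ⟩ := IsCyclic.exists_generator (α := Fˣ)
      have hζord : orderOf ζ = Fintype.card Fˣ := by
        rw [orderOf_eq_card_of_forall_mem_zpowers hζ, Nat.card_eq_fintype_card]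
      have hpd : 1 ≤ p ^ d := Nat.one_le_pow _ _ hp.pos
      have hζpow : ζ ^ (p ^ d - 1) = 1 := by
        have hx : (ζ : F) ^ (p ^ d) = (ζ : F) := hfix _
        have hne0 : (ζ : F) ≠ 0 := Units.ne_zero ζ
        have h3 : (ζ : F) ^ (p ^ d - 1) * (ζ : F) = 1 * (ζ : F) := by
          rw [← pow_succ, Nat.sub_add_cancel hpd, one_mul]; exact hx
        have hval : (ζ : F) ^ (p ^ d - 1) = 1 := mul_right_cancel₀ hne0 h3
        ext
        rw [Units.val_pow_eq_pow_val, hval, Units.val_one]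
      have hdvd : Fintype.card Fˣ ∣ p ^ d - 1 := by
        rw [← hζord]; exact orderOf_dvd_of_pow_eq_one hζpow
      have hcardU : Fintype.card Fˣ = p ^ n - 1 := by
        rw [Fintype.card_units, hcard]
      rw [hcardU] at hdvd
      have hpn : 1 < p ^ n := Nat.one_lt_pow hn0.ne' hp.one_lt
      have hpdpos : 0 < p ^ d - 1 := by
        have : 1 < p ^ d := Nat.one_lt_pow hd0.ne' hp.one_lt
        omega
      have hle : p ^ n - 1 ≤ p ^ d - 1 := Nat.le_of_dvd hpdpos hdvd
      have hle2 : p ^ n ≤ p ^ d := by omega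
      exact (Nat.pow_le_pow_iff_right hp.one_lt).mp hle2
    exact le_antisymm (Nat.le_of_dvd hn0 h1) h2
  classical
  set z := ξ ^ j with hz
  have hNsplit : N = ℘ * ℘ ^ (m - 1) := by
    rw [hN, ← pow_succ']
    congr 1
    omega
  have hcardG : Fintype.card (F ≃ₐ[ZMod p] F) = n := by
    rw [← Nat.card_eq_fintype_card, IsGalois.card_aut_eq_finrank, hfin]
  have key : algebraMap (ZMod p) F (Algebra.trace (ZMod p) F z) = ∑ i ∈ range n, z ^ (p ^ i) := by
    rw [trace_eq_sum_automorphisms]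
    rw [← aux_sum_over_group g (by rw [hord, hcardG]) (fun σ => σ z), hcardG]
    exact Finset.sum_congr rfl (fun i _ => hgpow i z)
  have hzN : z ^ N = 1 := by
    rw [hz, ← pow_mul, mul_comm j N, pow_mul, hξ.pow_eq_one, one_pow]
  have hzmod : ∀ a : ℕ, z ^ a = z ^ (a % N) := fun a => pow_eq_pow_mod a hzN
  have hcop : Nat.Coprime p N := Nat.Coprime.pow_right m ((Nat.coprime_primes hp h℘).mpr hne)
  set P : (ZMod N)ˣ := ZMod.unitOfCoprime p hcop with hP
  have hPord : orderOf P = n := by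
    rw [hP, ← orderOf_units, ZMod.coe_unitOfCoprime]
    exact hprim
  have hcardU : Fintype.card (ZMod N)ˣ = n := ZMod.card_units_eq_totient N
  have step1 : ∑ u : (ZMod N)ˣ, z ^ ((u : ZMod N)).val = ∑ i ∈ range n, z ^ (p ^ i) := by
    rw [← aux_sum_over_group P (by rw [hPord, hcardU]) (fun u => z ^ ((u : ZMod N)).val), hcardU]
    refine Finset.sum_congr rfl (fun i _ => ?_)
    have hPi : ((P ^ i : (ZMod N)ˣ) : ZMod N) = ((p ^ i : ℕ) : ZMod N) := by
      rw [hP, Units.val_pow_eq_pow_val, ZMod.coe_unitOfCoprime, Nat.cast_pow]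
    rw [hPi, ZMod.val_natCast, ← hzmod]
  have hdvd_iff : ∀ t : ℕ, Nat.Coprime t N ↔ ¬ ℘ ∣ t := by
    intro t
    rw [hN, Nat.coprime_pow_right_iff hm, Nat.coprime_comm]
    exact h℘.coprime_iff_not_dvd
  have step2 : ∑ u : (ZMod N)ˣ, z ^ ((u : ZMod N)).val
      = ∑ t ∈ (range N).filter (fun t => ¬ ℘ ∣ t), z ^ t := by
    refine Finset.sum_bij (fun u _ => ((u : ZMod N)).val) ?_ ?_ ?_ ?_
    · intro u _
      rw [Finset.mem_filter, Finset.mem_range]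
      refine ⟨ZMod.val_lt _, ?_⟩
      rw [← hdvd_iff]
      have hu : IsUnit ((((u : ZMod N)).val : ℕ) : ZMod N) := by
        rw [ZMod.natCast_val, ZMod.cast_id]
        exact u.isUnit
      exact (ZMod.isUnit_iff_coprime _ _).mp hu
    · intro u1 _ u2 _ h
      exact Units.ext (ZMod.val_injective N h)
    · intro t ht
      rw [Finset.mem_filter, Finset.mem_range] at ht
      have hc : Nat.Coprime t N := (hdvd_iff t).mpr ht.2
      refine ⟨ZMod.unitOfCoprime t hc, Finset.mem_univ _, ?_⟩
      show ((ZMod.unitOfCoprime t hc : (ZMod N)ˣ) : ZMod N).val = t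
      rw [ZMod.coe_unitOfCoprime, ZMod.val_natCast, Nat.mod_eq_of_lt ht.1]
    · intro u _
      rfl
  have step3 : ∑ t ∈ (range N).filter (fun t => ℘ ∣ t), z ^ t
      = ∑ s ∈ range (℘ ^ (m - 1)), (z ^ ℘) ^ s := by
    symm
    refine Finset.sum_bij (fun s _ => ℘ * s) ?_ ?_ ?_ ?_
    · intro s hs
      rw [Finset.mem_range] at hs
      rw [Finset.mem_filter, Finset.mem_range]
      refine ⟨?_, ⟨s, rfl⟩⟩
      calc ℘ * s < ℘ * ℘ ^ (m - 1) := (Nat.mul_lt_mul_left h℘.pos).mpr hs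
        _ = N := hNsplit.symm
    · intro a _ b _ h
      exact Nat.eq_of_mul_eq_mul_left h℘.pos h
    · intro t ht
      rw [Finset.mem_filter, Finset.mem_range] at ht
      obtain ⟨s, hs⟩ := ht.2
      refine ⟨s, ?_, hs.symm⟩
      rw [Finset.mem_range]
      by_contra hcon
      push_neg at hcon
      have hge : N ≤ ℘ * s := by
        calc N = ℘ * ℘ ^ (m - 1) := hNsplit
          _ ≤ ℘ * s := Nat.mul_le_mul_left _ hcon
      have h1 : ℘ * s < N := hs ▸ ht.1
      exact absurd h1 (not_lt.mpr hge)
    · intro s _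
      exact (pow_mul z ℘ s).symm
  have hfull : ∑ t ∈ range N, z ^ t = if z = 1 then (N : F) else 0 := aux_geom_sum z N hzN
  have hz℘N : (z ^ ℘) ^ (℘ ^ (m - 1)) = 1 := by
    rw [← pow_mul, ← hNsplit]
    exact hzN
  have hmult : ∑ s ∈ range (℘ ^ (m - 1)), (z ^ ℘) ^ s
      = if z ^ ℘ = 1 then ((℘ ^ (m - 1) : ℕ) : F) else 0 := aux_geom_sum _ _ hz℘N
  have hcond1 : z = 1 ↔ ℘ ^ m ∣ j := by
    rw [hz]
    exact hξ.pow_eq_one_iff_dvd j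
  have hcond2 : z ^ ℘ = 1 ↔ ℘ ^ (m - 1) ∣ j := by
    rw [hz, ← pow_mul, hξ.pow_eq_one_iff_dvd, hNsplit, Nat.mul_comm ℘ (℘ ^ (m - 1))]
    exact Nat.mul_dvd_mul_iff_right h℘.pos
  have main : algebraMap (ZMod p) F (Algebra.trace (ZMod p) F z)
      = (if z = 1 then (N : F) else 0) - (if z ^ ℘ = 1 then ((℘ ^ (m - 1) : ℕ) : F) else 0) := by
    rw [key, ← step1, step2]
    have hsplit := Finset.sum_filter_add_sum_filter_not (range N) (fun t => ℘ ∣ t) (fun t => z ^ t)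
    have hnot : ∑ t ∈ (range N).filter (fun t => ¬ ℘ ∣ t), z ^ t
        = (∑ t ∈ range N, z ^ t) - ∑ t ∈ (range N).filter (fun t => ℘ ∣ t), z ^ t :=
      eq_sub_of_add_eq' hsplit
    rw [hnot, hfull, step3, hmult]
  apply halg_inj
  rw [main]
  by_cases h1 : ℘ ^ m ∣ j
  · have hz1 : z = 1 := hcond1.mpr h1
    have hz2 : z ^ ℘ = 1 := by rw [hz1, one_pow]
    rw [if_pos hz1, if_pos hz2, if_pos h1, map_natCast]
    have harith : (℘ - 1) * ℘ ^ (m - 1) = N - ℘ ^ (m - 1) := by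
      rw [Nat.sub_mul, one_mul, ← hNsplit]
    have hle : ℘ ^ (m - 1) ≤ N := by
      rw [hNsplit]
      exact Nat.le_mul_of_pos_left _ h℘.pos
    rw [harith, Nat.cast_sub hle]
  · rw [if_neg (fun h => h1 (hcond1.mp h))]
    by_cases h2 : ℘ ^ (m - 1) ∣ j
    · rw [if_pos (hcond2.mpr h2), if_neg h1, if_pos h2, zero_sub, map_neg, map_natCast]
    · rw [if_neg (fun h => h2 (hcond2.mp h)), if_neg h1, if_neg h2, sub_zero, map_zero]
end

section
/- Let p be an odd prime, ℘ an odd prime distinct from p, m ≥ 1, with p a primitive root modulo 2℘^m. Let q = p^{φ(2℘^m)} and let ξ ∈ 𝔽_q be a primitive 2℘^m-th root of unity. Then for any nonnegative integer j: Tr(ξ^j) = (℘−1)℘^{m−1} if 2℘^m ∣ j; Tr(ξ^j) = −(℘−1)℘^{m−1} if ℘^m ∣ j and j is odd; Tr(ξ^j) = −℘^{m−1} if 2℘^{m−1} ∣ j but ℘^m ∤ j; Tr(ξ^j) = ℘^{m−1} if ℘^{m−1} ∣ j, ℘^m ∤ j and j is odd; and Tr(ξ^j) = 0 otherwise. -/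
open Finset

lemma trace_eq_sum_frob (p : ℕ) (hp : p.Prime) (hpodd : Odd p) (F : Type*) [Field F] [Fintype F]
    [Algebra (ZMod p) F] (n : ℕ) (hn : 1 ≤ n) (hcard : Fintype.card F = p ^ n) (x : F) :
    algebraMap (ZMod p) F (Algebra.trace (ZMod p) F x) = ∑ i ∈ Finset.range n, x ^ p ^ i := by
  haveI : Fact p.Prime := ⟨hp⟩
  haveI : CharP F p := charP_of_injective_algebraMap' (ZMod p) p
  haveI : ExpChar F p := .prime hp
  -- Frobenius as an AlgEquiv
  let φ : F ≃ₐ[ZMod p] F := AlgEquiv.ofRingEquiv (f := frobeniusEquiv F p)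
    (fun c => by
      show (algebraMap (ZMod p) F c) ^ p = algebraMap (ZMod p) F c
      rw [← map_pow, ZMod.pow_card])
  have hφpow : ∀ (i : ℕ) (y : F), (φ ^ i) y = y ^ p ^ i := by
    intro i
    induction i with
    | zero => intro y; simp
    | succ k ih =>
      intro y
      rw [pow_succ, AlgEquiv.mul_apply, ih]
      show (y ^ p) ^ p ^ k = y ^ p ^ (k+1)
      rw [← pow_mul, pow_succ']
  -- the Frobenius powers are distinct
  have hfr : Module.finrank (ZMod p) F = n := by
    have := Module.card_eq_pow_finrank (K := ZMod p) (V := F)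
    rw [ZMod.card, hcard] at this
    exact (Nat.pow_right_injective hp.two_le this.symm)
  have hcardaut : Fintype.card (F ≃ₐ[ZMod p] F) = n := by
    rw [← Nat.card_eq_fintype_card, IsGalois.card_aut_eq_finrank, hfr]
  obtain ⟨g, hg⟩ := IsCyclic.exists_generator (α := Fˣ)
  have hog : orderOf g = p ^ n - 1 := by
    rw [orderOf_eq_card_of_forall_mem_zpowers hg, Nat.card_units, Nat.card_eq_fintype_card, hcard]
  have hinj : Function.Injective (fun i : Fin n => φ ^ (i : ℕ)) := by
    intro a b hab
    have hab' : φ ^ (a : ℕ) = φ ^ (b : ℕ) := hab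
    have h1 : (φ ^ (a : ℕ)) (g : F) = (φ ^ (b : ℕ)) (g : F) := by rw [hab']
    rw [hφpow, hφpow] at h1
    have h2 : (g : Fˣ) ^ p ^ (a : ℕ) = g ^ p ^ (b : ℕ) := by
      ext; push_cast; exact h1
    rw [pow_eq_pow_iff_modEq, hog] at h2
    have hlt : ∀ c : Fin n, p ^ (c : ℕ) < p ^ n - 1 := by
      intro c
      have h3 : p ^ (c : ℕ) ≤ p ^ (n - 1) := Nat.pow_le_pow_right hp.pos (by omega)
      have h4 : p ^ (n - 1) ≤ p ^ n - 1 := by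
        have := Nat.pow_le_pow_right hp.pos (Nat.sub_le n 1)
        have h5 : p ^ (n-1) < p ^ n := Nat.pow_lt_pow_right hp.one_lt (by omega)
        omega
      rcases Nat.lt_or_ge (p ^ (c:ℕ)) (p ^ n - 1) with h | h
      · exact h
      · exfalso
        have : p ^ (c : ℕ) = p ^ n - 1 := by omega
        have hodd1 : Odd (p ^ (c : ℕ)) := hpodd.pow
        have heven : Even (p ^ n - 1) := by
          have : Odd (p ^ n) := hpodd.pow
          rcases this with ⟨k, hk⟩
          exact ⟨k, by omega⟩
        rw [this] at hodd1
        exact (Nat.not_even_iff_odd.mpr hodd1) heven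
    have := (Nat.ModEq.eq_of_lt_of_lt h2 (hlt a) (hlt b))
    exact Fin.ext (Nat.pow_right_injective hp.two_le this)
  have hbij : Function.Bijective (fun i : Fin n => φ ^ (i : ℕ)) := by
    rw [Fintype.bijective_iff_injective_and_card]
    exact ⟨hinj, by simp [hcardaut]⟩
  rw [trace_eq_sum_automorphisms]
  rw [← Fintype.sum_bijective _ hbij _ _ (fun i => rfl)]
  rw [← Fin.sum_univ_eq_sum_range (fun i => x ^ p ^ i) n]
  exact Fintype.sum_congr _ _ (fun i => hφpow i x)

open Finset

lemma sum_frob_pow_eq_sum_coprime (N p : ℕ) (hN : 0 < N) (hcop : Nat.Coprime p N)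
    (hord : orderOf (p : ZMod N) = N.totient)
    {F : Type*} [Field F] (η : F) (hη : η ^ N = 1) :
    ∑ i ∈ Finset.range N.totient, η ^ p ^ i
      = ∑ k ∈ (Finset.range N).filter N.Coprime, η ^ k := by
  haveI : NeZero N := ⟨hN.ne'⟩
  set u : (ZMod N)ˣ := ZMod.unitOfCoprime p hcop with hu
  have hucoe : (u : ZMod N) = (p : ℕ) := rfl
  have hordu : orderOf u = N.totient := by
    rw [← hord, ← hucoe, orderOf_units]
  have hinj : Set.InjOn (fun i => p ^ i % N) (Finset.range N.totient : Set ℕ) := by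
    intro a ha b hb hab
    simp only [Finset.coe_range, Set.mem_Iio] at ha hb
    have h1 : ((p:ZMod N)) ^ a = (p:ZMod N) ^ b := by
      have := congrArg (fun k : ℕ => (k : ZMod N)) hab
      simpa [ZMod.natCast_mod, Nat.cast_pow] using this
    have h2 : u ^ a = u ^ b := by
      ext
      push_cast [hucoe]
      exact h1
    rw [pow_eq_pow_iff_modEq, hordu] at h2
    exact h2.eq_of_lt_of_lt ha hb
  have himage : (Finset.range N.totient).image (fun i => p ^ i % N)
      = (Finset.range N).filter N.Coprime := by
    apply Finset.eq_of_subset_of_card_le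
    · intro k hk
      simp only [Finset.mem_image, Finset.mem_range] at hk
      obtain ⟨i, hi, rfl⟩ := hk
      refine Finset.mem_filter.mpr ⟨Finset.mem_range.mpr (Nat.mod_lt _ hN), ?_⟩
      have h3 : Nat.Coprime N (p ^ i) := (Nat.Coprime.pow_right i hcop.symm)
      rw [Nat.Coprime, Nat.gcd_rec] at h3
      exact Nat.coprime_comm.mp h3
    · rw [← Nat.totient_eq_card_coprime, Finset.card_image_of_injOn hinj, Finset.card_range]
  rw [← himage, Finset.sum_image hinj]
  exact Finset.sum_congr rfl (fun i _ => pow_eq_pow_mod _ hη)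

open Finset

lemma sum_pow_dvd_filter (N d : ℕ) (hd : d ∣ N) (hd0 : 0 < d) (hN : 0 < N)
    {F : Type*} [Field F] (ξ : F) (hξ : IsPrimitiveRoot ξ N) (j : ℕ) :
    ∑ k ∈ (Finset.range N).filter (d ∣ ·), (ξ ^ j) ^ k
      = if N / d ∣ j then ((N / d : ℕ) : F) else 0 := by
  have hdN : d * (N / d) = N := Nat.mul_div_cancel' hd
  have h1 : ∑ k ∈ (Finset.range N).filter (d ∣ ·), (ξ ^ j) ^ k
      = ∑ t ∈ Finset.range (N / d), ((ξ ^ j) ^ d) ^ t := by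
    rw [eq_comm]
    apply Finset.sum_nbij' (i := fun t => d * t) (j := fun k => k / d)
    · intro t ht
      simp only [Finset.mem_range] at ht ⊢
      refine Finset.mem_filter.mpr ⟨Finset.mem_range.mpr ?_, Dvd.intro t rfl⟩
      calc d * t < d * (N / d) := (Nat.mul_lt_mul_left hd0).mpr ht
        _ = N := hdN
    · intro k hk
      simp only [Finset.mem_filter, Finset.mem_range] at hk
      exact Finset.mem_range.mpr (Nat.div_lt_div_of_lt_of_dvd hd hk.1)
    · intro t ht
      exact Nat.mul_div_cancel_left t hd0
    · intro k hk
      simp only [Finset.mem_filter, Finset.mem_range] at hk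
      exact Nat.mul_div_cancel' hk.2
    · intro t ht
      rw [← pow_mul]
  rw [h1]
  have hcond : (ξ ^ j) ^ d = 1 ↔ N / d ∣ j := by
    rw [← pow_mul, hξ.pow_eq_one_iff_dvd]
    constructor
    · intro h
      have : (N / d) * d ∣ j * d := by rwa [mul_comm (N/d) d, hdN]
      exact (Nat.mul_dvd_mul_iff_right hd0).mp this
    · intro h
      have := Nat.mul_dvd_mul_right h d
      rwa [mul_comm (N/d) d, hdN] at this
  by_cases hc : N / d ∣ j
  · rw [if_pos hc]
    have : (ξ ^ j) ^ d = 1 := hcond.mpr hc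
    simp [this]
  · rw [if_neg hc]
    have hne1 : (ξ ^ j) ^ d ≠ 1 := fun h => hc (hcond.mp h)
    rw [geom_sum_eq hne1]
    have : ((ξ ^ j) ^ d) ^ (N / d) = 1 := by
      rw [← pow_mul, ← pow_mul, hdN, mul_comm, pow_mul, hξ.pow_eq_one, one_pow]
    rw [this, sub_self, zero_div]
open Finset in
theorem stmt_7 (p ℘ : ℕ) (hp : p.Prime) (h℘ : ℘.Prime) (hpodd : Odd p) (h℘odd : Odd ℘)
    (hne : p ≠ ℘) (m : ℕ) (hm : 1 ≤ m)
    (hprim : orderOf (p : ZMod (2 * ℘ ^ m)) = (2 * ℘ ^ m).totient)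
    (F : Type*) [Field F] [Fintype F] [Algebra (ZMod p) F]
    (hcard : Fintype.card F = p ^ (2 * ℘ ^ m).totient)
    (ξ : F) (hξ : IsPrimitiveRoot ξ (2 * ℘ ^ m)) (j : ℕ) :
    Algebra.trace (ZMod p) F (ξ ^ j) =
      if 2 * ℘ ^ m ∣ j then (((℘ - 1) * ℘ ^ (m - 1) : ℕ) : ZMod p)
      else if ℘ ^ m ∣ j ∧ Odd j then -(((℘ - 1) * ℘ ^ (m - 1) : ℕ) : ZMod p)
      else if 2 * ℘ ^ (m - 1) ∣ j ∧ ¬ ℘ ^ m ∣ j then -((℘ ^ (m - 1) : ℕ) : ZMod p)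
      else if ℘ ^ (m - 1) ∣ j ∧ ¬ ℘ ^ m ∣ j ∧ Odd j then ((℘ ^ (m - 1) : ℕ) : ZMod p)
      else 0 := by
  haveI : Fact p.Prime := ⟨hp⟩
  obtain ⟨m', rfl⟩ : ∃ m', m = m' + 1 := ⟨m - 1, by omega⟩
  simp only [Nat.add_sub_cancel]
  set N := 2 * ℘ ^ (m' + 1) with hNdef
  have h℘pos : 0 < ℘ := h℘.pos
  have hNpos : 0 < N := by positivity
  have h℘2 : ℘ ≠ 2 := by rintro rfl; exact (by norm_num : ¬ Odd 2) h℘odd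
  have hcop2℘ : Nat.Coprime 2 ℘ := (Nat.coprime_primes Nat.prime_two h℘).mpr (Ne.symm h℘2)
  have hpN : Nat.Coprime p N := by
    refine Nat.Coprime.mul_right ?_ (Nat.Coprime.pow_right _ ?_)
    · exact Nat.coprime_two_right.mpr hpodd
    · exact (Nat.coprime_primes hp h℘).mpr hne
  have htot1 : 1 ≤ N.totient := Nat.totient_pos.mpr hNpos
  set η : F := ξ ^ j with hη
  have hηN : η ^ N = 1 := by rw [hη, ← pow_mul, mul_comm, pow_mul, hξ.pow_eq_one, one_pow]
  -- trace as sum over coprime residues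
  have key1 : algebraMap (ZMod p) F (Algebra.trace (ZMod p) F (ξ ^ j))
      = ∑ k ∈ (Finset.range N).filter N.Coprime, η ^ k := by
    rw [trace_eq_sum_frob p hp hpodd F N.totient htot1 hcard (ξ ^ j)]
    exact sum_frob_pow_eq_sum_coprime N p hNpos hpN hprim η hηN
  -- inclusion-exclusion
  have h2℘iff : ∀ k, 2 * ℘ ∣ k ↔ 2 ∣ k ∧ ℘ ∣ k := by
    intro k
    constructor
    · intro h
      exact ⟨(dvd_mul_right 2 ℘).trans h, (dvd_mul_left ℘ 2).trans h⟩
    · rintro ⟨h1, h2⟩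
      exact Nat.Coprime.mul_dvd_of_dvd_of_dvd hcop2℘ h1 h2
  have hcoiff : ∀ k, N.Coprime k ↔ ¬ 2 ∣ k ∧ ¬ ℘ ∣ k := by
    intro k
    rw [hNdef, Nat.coprime_mul_iff_left, Nat.coprime_pow_left_iff (by omega)]
    rw [Nat.Prime.coprime_iff_not_dvd Nat.prime_two, Nat.Prime.coprime_iff_not_dvd h℘]
  have hdec : ∀ k : ℕ, (if N.Coprime k then η ^ k else 0)
      = η ^ k - (if 2 ∣ k then η ^ k else 0) - (if ℘ ∣ k then η ^ k else 0)
        + (if 2 * ℘ ∣ k then η ^ k else 0) := by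
    intro k
    by_cases hA : 2 ∣ k <;> by_cases hB : ℘ ∣ k <;>
      simp [hA, hB, hcoiff, h2℘iff]
  have key2 : ∑ k ∈ (Finset.range N).filter N.Coprime, η ^ k
      = (∑ k ∈ (Finset.range N).filter ((1 : ℕ) ∣ ·), η ^ k)
        - (∑ k ∈ (Finset.range N).filter (2 ∣ ·), η ^ k)
        - (∑ k ∈ (Finset.range N).filter (℘ ∣ ·), η ^ k)
        + (∑ k ∈ (Finset.range N).filter (2 * ℘ ∣ ·), η ^ k) := by
    rw [Finset.sum_filter, Finset.sum_filter, Finset.sum_filter, Finset.sum_filter,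
      Finset.sum_filter]
    rw [Finset.sum_congr rfl (fun k _ => hdec k)]
    rw [Finset.sum_add_distrib, Finset.sum_sub_distrib, Finset.sum_sub_distrib]
    congr 3
    exact Finset.sum_congr rfl (fun k _ => by simp)
  -- divisions
  have hq1 : N / 1 = N := Nat.div_one N
  have hq2 : N / 2 = ℘ ^ (m' + 1) := by
    rw [hNdef, Nat.mul_div_cancel_left _ (by norm_num)]
  have hq℘ : N / ℘ = 2 * ℘ ^ m' := by
    have hN' : N = ℘ * (2 * ℘ ^ m') := by rw [hNdef]; ring
    rw [hN', Nat.mul_div_cancel_left _ h℘pos]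
  have hq2℘ : N / (2 * ℘) = ℘ ^ m' := by
    have hN' : N = (2 * ℘) * ℘ ^ m' := by rw [hNdef]; ring
    rw [hN', Nat.mul_div_cancel_left _ (by positivity)]
  have hd1 : (1 : ℕ) ∣ N := one_dvd N
  have hd2 : (2 : ℕ) ∣ N := dvd_mul_right 2 _
  have hd℘ : ℘ ∣ N := Dvd.dvd.mul_left (dvd_pow_self ℘ (by omega)) 2
  have hd2℘ : 2 * ℘ ∣ N := by
    rw [hNdef, pow_succ']
    exact mul_dvd_mul_left 2 (Dvd.dvd.mul_right (dvd_refl ℘) _)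
  rw [sum_pow_dvd_filter N 1 hd1 one_pos hNpos ξ hξ j,
      sum_pow_dvd_filter N 2 hd2 (by norm_num) hNpos ξ hξ j,
      sum_pow_dvd_filter N ℘ hd℘ h℘pos hNpos ξ hξ j,
      sum_pow_dvd_filter N (2 * ℘) hd2℘ (by positivity) hNpos ξ hξ j,
      hq1, hq2, hq℘, hq2℘] at key2
  -- transfer to ZMod p
  set E : ZMod p := (if N ∣ j then ((N : ℕ) : ZMod p) else 0)
      - (if ℘ ^ (m' + 1) ∣ j then ((℘ ^ (m' + 1) : ℕ) : ZMod p) else 0)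
      - (if 2 * ℘ ^ m' ∣ j then ((2 * ℘ ^ m' : ℕ) : ZMod p) else 0)
      + (if ℘ ^ m' ∣ j then ((℘ ^ m' : ℕ) : ZMod p) else 0) with hE
  have key3 : Algebra.trace (ZMod p) F (ξ ^ j) = E := by
    apply (algebraMap (ZMod p) F).injective
    rw [key1, key2, hE]
    simp only [map_add, map_sub, apply_ite (algebraMap (ZMod p) F), map_natCast, map_zero]
  rw [key3]
  -- final case analysis
  have hoddtwo : ∀ k : ℕ, Odd k ↔ ¬ 2 ∣ k := by
    intro k; rw [Nat.odd_iff, Nat.two_dvd_ne_zero]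
  have hsub : ((℘ - 1 : ℕ) : ZMod p) = (℘ : ZMod p) - 1 := by
    rw [Nat.cast_sub h℘.one_le, Nat.cast_one]
  by_cases h1 : N ∣ j
  · rw [if_pos h1]
    have p2 : ℘ ^ (m' + 1) ∣ j := ((dvd_mul_left _ 2).trans h1)
    have p3 : 2 * ℘ ^ m' ∣ j := by
      refine dvd_trans ?_ h1
      exact mul_dvd_mul_left 2 (pow_dvd_pow ℘ (by omega))
    have p4 : ℘ ^ m' ∣ j := (pow_dvd_pow ℘ (by omega)).trans p2
    rw [hE, if_pos h1, if_pos p2, if_pos p3, if_pos p4]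
    push_cast [hsub, hNdef]
    ring
  · rw [if_neg h1]
    by_cases h2 : ℘ ^ (m' + 1) ∣ j ∧ Odd j
    · rw [if_pos h2]
      obtain ⟨h2a, h2b⟩ := h2
      have hn2 : ¬ 2 ∣ j := (hoddtwo j).mp h2b
      have p4 : ℘ ^ m' ∣ j := (pow_dvd_pow ℘ (by omega)).trans h2a
      have np3 : ¬ 2 * ℘ ^ m' ∣ j := fun h => hn2 ((dvd_mul_right 2 _).trans h)
      rw [hE, if_neg h1, if_pos h2a, if_neg np3, if_pos p4]
      push_cast [hsub, hNdef]
      ring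
    · rw [if_neg h2]
      by_cases h3 : 2 * ℘ ^ m' ∣ j ∧ ¬ ℘ ^ (m' + 1) ∣ j
      · rw [if_pos h3]
        obtain ⟨h3a, h3b⟩ := h3
        have p4 : ℘ ^ m' ∣ j := (dvd_mul_left _ 2).trans h3a
        rw [hE, if_neg h1, if_neg h3b, if_pos h3a, if_pos p4]
        push_cast [hNdef]
        ring
      · rw [if_neg h3]
        by_cases h4 : ℘ ^ m' ∣ j ∧ ¬ ℘ ^ (m' + 1) ∣ j ∧ Odd j
        · rw [if_pos h4]
          obtain ⟨h4a, h4b, h4c⟩ := h4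
          have hn2 : ¬ 2 ∣ j := (hoddtwo j).mp h4c
          have np3 : ¬ 2 * ℘ ^ m' ∣ j := fun h => hn2 ((dvd_mul_right 2 _).trans h)
          rw [hE, if_neg h1, if_neg h4b, if_neg np3, if_pos h4a]
          push_cast [hNdef]
          ring
        · rw [if_neg h4]
          -- show all indicators vanish
          have hcop2pm : ∀ a : ℕ, Nat.Coprime 2 (℘ ^ a) := fun a => hcop2℘.pow_right a
          have np2 : ¬ ℘ ^ (m' + 1) ∣ j := by
            intro hp2
            by_cases hodd : Odd j
            · exact h2 ⟨hp2, hodd⟩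
            · have h2j : 2 ∣ j := by
                rw [hoddtwo] at hodd; exact not_not.mp hodd
              exact h1 (Nat.Coprime.mul_dvd_of_dvd_of_dvd (hcop2pm (m' + 1)) h2j hp2)
          have np3 : ¬ 2 * ℘ ^ m' ∣ j := fun h => h3 ⟨h, np2⟩
          have np4 : ¬ ℘ ^ m' ∣ j := by
            intro hp4
            by_cases hodd : Odd j
            · exact h4 ⟨hp4, np2, hodd⟩
            · have h2j : 2 ∣ j := by
                rw [hoddtwo] at hodd; exact not_not.mp hodd
              exact np3 (Nat.Coprime.mul_dvd_of_dvd_of_dvd (hcop2pm m') h2j hp4)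
          rw [hE, if_neg h1, if_neg np2, if_neg np3, if_neg np4]
          ring
end

section
/- Let p be an odd prime that is a primitive root modulo 4 (i.e., p ≡ 3 mod 4), q = p², ξ ∈ 𝔽_q a primitive 4-th root of unity, and χ the canonical additive character of 𝔽_q. For a = a₁ξ + a₂ξ² with a₁,a₂ ∈ 𝔽_p, the sum S₄(a) = Σ_{i=0}^{3} χ(aξ^i) equals ζ_p^{2a₁} + ζ_p^{−2a₁} + ζ_p^{2a₂} + ζ_p^{−2a₂}, where ζ_p = e^{2πi/p}. -/
open Complex in
theorem stmt_8 (p : ℕ) (hp : p.Prime) (hpodd : Odd p)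
    (hprim : orderOf (p : ZMod 4) = Nat.totient 4)
    (F : Type*) [Field F] [Fintype F] [Algebra (ZMod p) F]
    (hcard : Fintype.card F = p ^ 2)
    (ξ : F) (hξ : IsPrimitiveRoot ξ 4)
    (a : F) (a₁ a₂ : ZMod p)
    (ha : a = algebraMap (ZMod p) F a₁ * ξ + algebraMap (ZMod p) F a₂ * ξ ^ 2) :
    (∑ i ∈ Finset.range 4,
        Complex.exp (2 * Real.pi * I / p) ^ (Algebra.trace (ZMod p) F (a * ξ ^ i)).val) =
      Complex.exp (2 * Real.pi * I / p) ^ ((2 * a₁ : ZMod p)).val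
        + Complex.exp (2 * Real.pi * I / p) ^ ((-(2 * a₁) : ZMod p)).val
        + Complex.exp (2 * Real.pi * I / p) ^ ((2 * a₂ : ZMod p)).val
        + Complex.exp (2 * Real.pi * I / p) ^ ((-(2 * a₂) : ZMod p)).val := by
  have : Fact p.Prime := ⟨hp⟩
  have hchar : CharP F p := charP_of_injective_algebraMap (algebraMap (ZMod p) F).injective p
  -- p ≡ 3 mod 4
  have hp4 : p % 4 = 3 := by
    have h4 : p % 4 < 4 := Nat.mod_lt _ (by norm_num)
    have hm2 : p % 2 = 1 := Nat.odd_iff.mp hpodd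
    have hmm : p % 4 % 2 = 1 := by omega
    by_contra h
    have h1 : p % 4 = 1 := by omega
    rw [show (p : ZMod 4) = ((p % 4 : ℕ) : ZMod 4) by rw [ZMod.natCast_mod], h1] at hprim
    simp [Nat.totient] at hprim
    revert hprim; decide
  -- ξ facts
  have h4 : ξ ^ 4 = 1 := hξ.pow_eq_one
  have h2 : ξ ^ 2 = -1 := by
    have hsq : ξ ^ 2 * ξ ^ 2 = 1 := by rw [← pow_add]; exact h4
    rcases mul_self_eq_one_iff.mp hsq with h | h
    · exact absurd h (hξ.pow_ne_one_of_pos_of_lt (by norm_num) (by norm_num))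
    · exact h
  -- trace is invariant under Frobenius
  have htrp : ∀ x : F, Algebra.trace (ZMod p) F (x ^ p) = Algebra.trace (ZMod p) F x := by
    intro x
    let e : F ≃ₐ[ZMod p] F := AlgEquiv.ofRingEquiv (f := frobeniusEquiv F p)
      (fun c => by rw [frobeniusEquiv_def, ← map_pow, ZMod.pow_card])
    have := Algebra.trace_eq_of_algEquiv e x
    simpa [e, AlgEquiv.ofRingEquiv, frobeniusEquiv_def, frobenius_def] using this
  -- trace ξ = 0
  have hξp : ξ ^ p = -ξ := by
    conv_lhs => rw [← Nat.div_add_mod p 4, pow_add, pow_mul, h4, one_pow, one_mul, hp4]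
    rw [pow_succ, h2]; ring
  have trξ : Algebra.trace (ZMod p) F ξ = 0 := by
    have h := htrp ξ
    rw [hξp, map_neg] at h
    have h2' : (2 : ZMod p) * Algebra.trace (ZMod p) F ξ = 0 := by linear_combination -h
    have hne : (2 : ZMod p) ≠ 0 := by
      intro hc
      have : ((2 : ℕ) : ZMod p) = 0 := by exact_mod_cast hc
      rw [ZMod.natCast_eq_zero_iff] at this
      have := (Nat.prime_dvd_prime_iff_eq hp Nat.prime_two).mp this
      exact absurd hpodd (by simp [this, Nat.odd_iff])
    exact (mul_eq_zero.mp h2').resolve_left hne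
  -- trace 1 = 2
  have hfr : Module.finrank (ZMod p) F = 2 := by
    have h := Module.card_eq_pow_finrank (K := ZMod p) (V := F)
    rw [ZMod.card, hcard] at h
    exact (Nat.pow_right_injective hp.two_le h.symm)
  have tr1 : Algebra.trace (ZMod p) F 1 = 2 := by
    rw [show (1 : F) = algebraMap (ZMod p) F 1 by simp, Algebra.trace_algebraMap, hfr]
    simp
  -- linearity helper
  have hlin : ∀ (c : ZMod p) (x : F),
      Algebra.trace (ZMod p) F (algebraMap (ZMod p) F c * x) =
        c * Algebra.trace (ZMod p) F x := by
    intro c x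
    rw [← Algebra.smul_def, map_smul, smul_eq_mul]
  -- compute the four traces
  have e0 : Algebra.trace (ZMod p) F (a * ξ ^ 0) = -(2 * a₂) := by
    rw [pow_zero, mul_one, ha, map_add, hlin, hlin, trξ, h2, show ((-1 : F)) = -(1:F) from rfl,
      map_neg, tr1]; ring
  have e1 : Algebra.trace (ZMod p) F (a * ξ ^ 1) = -(2 * a₁) := by
    have : a * ξ ^ 1 = algebraMap (ZMod p) F a₁ * ξ ^ 2 + algebraMap (ZMod p) F a₂ * (ξ ^ 2 * ξ) := by
      rw [ha]; ring
    rw [this, map_add, hlin, hlin, h2]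
    simp only [neg_mul, one_mul, map_neg, trξ, map_neg, tr1]
    ring
  have e2 : Algebra.trace (ZMod p) F (a * ξ ^ 2) = 2 * a₂ := by
    have : a * ξ ^ 2 = algebraMap (ZMod p) F a₁ * (ξ ^ 2 * ξ) + algebraMap (ZMod p) F a₂ * ξ ^ 4 := by
      rw [ha]; ring
    rw [this, map_add, hlin, hlin, h2, h4]
    simp only [neg_mul, one_mul, map_neg, trξ, tr1]
    ring
  have e3 : Algebra.trace (ZMod p) F (a * ξ ^ 3) = 2 * a₁ := by
    have : a * ξ ^ 3 = algebraMap (ZMod p) F a₁ * ξ ^ 4 + algebraMap (ZMod p) F a₂ * (ξ ^ 4 * ξ) := by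
      rw [ha]; ring
    rw [this, map_add, hlin, hlin, h4]
    simp only [one_mul, mul_one, trξ, tr1]
    ring
  rw [Finset.sum_range_succ, Finset.sum_range_succ, Finset.sum_range_succ,
    Finset.sum_range_one, e0, e1, e2, e3]
  ring
end

section
/- Let p be an odd prime, ℘ an odd prime with p a primitive root modulo ℘^m, q = p^{φ(℘^m)}, and χ the canonical additive character of 𝔽_q. For any a ∈ 𝔽_p, writing ξ for a primitive ℘^m-th root of unity in 𝔽_q, one has Σ_{i=0}^{℘^m−1} χ(a ξ^i) = (℘−1)·ζ_p^{−a℘^{m−1}} + ζ_p^{a(℘−1)℘^{m−1}} + ℘^m − ℘, where ζ_p = e^{2πi/p} and exponents of ζ_p are computed mod p. -/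
open Finset IntermediateField

lemma aux_geom {F : Type*} [Field F] {η : F} {N : ℕ} (h1 : η ≠ 1) (hN : η ^ N = 1) :
    ∑ j ∈ range N, η ^ j = 0 := by
  have h := geom_sum_mul η N
  rw [hN, sub_self] at h
  rcases mul_eq_zero.mp h with h | h
  · exact h
  · exact absurd (sub_eq_zero.mp h) h1

lemma aux_pow_split {℘ m : ℕ} (hm : 1 ≤ m) : ℘ ^ m = ℘ * ℘ ^ (m - 1) := by
  conv_lhs => rw [← Nat.succ_pred_eq_of_pos hm]
  rw [pow_succ', Nat.pred_eq_sub_one]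

lemma aux_units_sum {F : Type*} [Field F] (℘ m : ℕ) (h℘ : ℘.Prime) (hm : 1 ≤ m)
    [NeZero (℘ ^ m)] (η : F) :
    ∑ u : (ZMod (℘ ^ m))ˣ, η ^ ((u : ZMod (℘ ^ m)).val) =
      (∑ j ∈ range (℘ ^ m), η ^ j) - ∑ t ∈ range (℘ ^ (m - 1)), (η ^ ℘) ^ t := by
  have h1 : ∑ u : (ZMod (℘ ^ m))ˣ, η ^ ((u : ZMod (℘ ^ m)).val)
      = ∑ j ∈ (range (℘ ^ m)).filter (fun j => Nat.Coprime j (℘ ^ m)), η ^ j := by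
    refine Finset.sum_nbij' (fun u => (u : ZMod (℘ ^ m)).val)
      (fun j => if h : Nat.Coprime j (℘ ^ m) then ZMod.unitOfCoprime j h else 1)
      (fun u _ => ?_) (fun j hj => Finset.mem_univ _) (fun u _ => ?_) (fun j hj => ?_)
      (fun u _ => rfl)
    · simp only [Finset.mem_filter, Finset.mem_range]
      exact ⟨ZMod.val_lt _, ZMod.val_coe_unit_coprime u⟩
    · simp only [dif_pos (ZMod.val_coe_unit_coprime u)]
      ext
      simp [ZMod.natCast_val, ZMod.cast_id]
    · simp only [Finset.mem_filter, Finset.mem_range] at hj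
      simp only [dif_pos hj.2]
      simp [ZMod.coe_unitOfCoprime, ZMod.val_natCast, Nat.mod_eq_of_lt hj.1]
  have h2 := Finset.sum_filter_add_sum_filter_not (range (℘ ^ m))
    (fun j => Nat.Coprime j (℘ ^ m)) (fun j => η ^ j)
  have h3 : ∑ j ∈ (range (℘ ^ m)).filter (fun j => ¬ Nat.Coprime j (℘ ^ m)), η ^ j
      = ∑ t ∈ range (℘ ^ (m - 1)), (η ^ ℘) ^ t := by
    have hdvd : ∀ j, ¬ Nat.Coprime j (℘ ^ m) ↔ ℘ ∣ j := by
      intro j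
      rw [Nat.coprime_pow_right_iff hm, Nat.coprime_comm, h℘.coprime_iff_not_dvd, not_not]
    refine Finset.sum_nbij' (fun j => j / ℘) (fun t => ℘ * t) (fun j hj => ?_)
      (fun t ht => ?_) (fun j hj => ?_) (fun t ht => ?_) (fun j hj => ?_)
    · simp only [Finset.mem_filter, Finset.mem_range, hdvd] at hj
      rw [Finset.mem_range]
      obtain ⟨k, rfl⟩ := hj.2
      simp only [Nat.mul_div_cancel_left _ h℘.pos]
      rw [aux_pow_split hm] at hj
      exact lt_of_mul_lt_mul_left hj.1 (Nat.zero_le _)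
    · simp only [Finset.mem_range] at ht
      simp only [Finset.mem_filter, Finset.mem_range, hdvd]
      refine ⟨?_, Dvd.intro _ rfl⟩
      rw [aux_pow_split hm]
      exact (Nat.mul_lt_mul_left h℘.pos).mpr ht
    · simp only [Finset.mem_filter, hdvd] at hj
      exact Nat.mul_div_cancel' hj.2
    · exact Nat.mul_div_cancel_left _ h℘.pos
    · simp only [Finset.mem_filter, hdvd] at hj
      obtain ⟨k, rfl⟩ := hj.2
      simp only [Nat.mul_div_cancel_left _ h℘.pos]
      rw [← pow_mul, mul_comm ℘ k, pow_mul]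
  rw [h1, eq_sub_iff_add_eq, ← h3, h2]

lemma aux_finrank (p ℘ m : ℕ) (hp : p.Prime)
    (F : Type*) [Field F] [Fintype F] [Algebra (ZMod p) F]
    (hcard : Fintype.card F = p ^ (℘ ^ m).totient) :
    Module.finrank (ZMod p) F = (℘ ^ m).totient := by
  haveI : Fact p.Prime := ⟨hp⟩
  haveI : FiniteDimensional (ZMod p) F := Module.Finite.of_finite
  have h := Module.card_eq_pow_finrank (K := ZMod p) (V := F)
  rw [ZMod.card, hcard] at h
  exact (Nat.pow_right_injective hp.two_le h).symm

lemma aux_adjoin_top (p ℘ m : ℕ) (hp : p.Prime) (h℘ : ℘.Prime) (hm : 1 ≤ m)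
    (hprim : orderOf (p : ZMod (℘ ^ m)) = (℘ ^ m).totient)
    (F : Type*) [Field F] [Fintype F] [Algebra (ZMod p) F]
    (hcard : Fintype.card F = p ^ (℘ ^ m).totient)
    (ξ : F) (hξ : IsPrimitiveRoot ξ (℘ ^ m)) :
    Algebra.adjoin (ZMod p) ({ξ} : Set F) = ⊤ := by
  haveI : Fact p.Prime := ⟨hp⟩
  haveI : NeZero (℘ ^ m) := ⟨pow_ne_zero _ h℘.ne_zero⟩
  haveI : FiniteDimensional (ZMod p) F := Module.Finite.of_finite
  have hfinF : Module.finrank (ZMod p) F = (℘ ^ m).totient := aux_finrank p ℘ m hp F hcard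
  set E := (ZMod p)⟮ξ⟯ with hE
  haveI : Fintype E := Fintype.ofFinite E
  set ξ' := AdjoinSimple.gen (ZMod p) ξ with hξ'def
  have hξ' : IsPrimitiveRoot ξ' (℘ ^ m) := by
    apply IsPrimitiveRoot.of_map_of_injective (f := algebraMap E F)
    · rw [AdjoinSimple.algebraMap_gen]; exact hξ
    · exact (algebraMap E F).injective
  have hdvd1 : ℘ ^ m ∣ Fintype.card E - 1 := by
    have hu : IsUnit ξ' := hξ'.isUnit (NeZero.ne _)
    have h1 : orderOf hu.unit = ℘ ^ m := by
      rw [← orderOf_units, hu.unit_spec, ← hξ'.eq_orderOf]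
    have h2 : orderOf hu.unit ∣ Nat.card (↥E)ˣ := orderOf_dvd_natCard _
    rw [h1, Nat.card_units, Nat.card_eq_fintype_card] at h2
    exact h2
  have hcardE : Fintype.card E = p ^ Module.finrank (ZMod p) E := by
    have h := Module.card_eq_pow_finrank (K := ZMod p) (V := E)
    rwa [ZMod.card] at h
  set d := Module.finrank (ZMod p) E with hd
  have hnd : (℘ ^ m).totient ∣ d := by
    rw [← hprim]
    apply orderOf_dvd_of_pow_eq_one
    have hp1 : 1 ≤ p ^ d := Nat.one_le_pow _ _ hp.pos
    have : ((p ^ d - 1 : ℕ) : ZMod (℘ ^ m)) = 0 :=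
      (ZMod.natCast_eq_zero_iff _ _).mpr (hcardE ▸ hdvd1)
    rw [Nat.cast_sub hp1, Nat.cast_pow, Nat.cast_one, sub_eq_zero] at this
    exact this
  have hdn : d ∣ (℘ ^ m).totient := by
    rw [← hfinF]
    exact ⟨Module.finrank E F, (Module.finrank_mul_finrank (ZMod p) E F).symm⟩
  have hdeq : d = (℘ ^ m).totient := Nat.dvd_antisymm hdn hnd
  have hEtop : E = ⊤ := by
    have h1 : Subalgebra.toSubmodule E.toSubalgebra = ⊤ := by
      apply Submodule.eq_top_of_finrank_eq
      rw [E.toSubalgebra.finrank_toSubmodule]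
      rw [hfinF, ← hdeq]
      rfl
    have h2 : E.toSubalgebra = ⊤ := Algebra.toSubmodule_eq_top.mp h1
    exact IntermediateField.toSubalgebra_injective (by rw [h2, IntermediateField.top_toSubalgebra])
  have := IntermediateField.adjoin_simple_toSubalgebra_of_isAlgebraic
    (F := ZMod p) (α := ξ) (IsAlgebraic.of_finite _ _)
  rw [← this, ← hE, hEtop, IntermediateField.top_toSubalgebra]

/-- The canonical additive character of a finite field `F` of characteristic `p`. -/
noncomputable def canChar (p : ℕ) (F : Type*) [Field F] [Fintype F] [Algebra (ZMod p) F]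
    (x : F) : ℂ :=
  Complex.exp (2 * Real.pi * Complex.I / p) ^ (Algebra.trace (ZMod p) F x).val

theorem stmt_10 (p ℘ m : ℕ) (hp : p.Prime) (hpodd : Odd p) (h℘ : ℘.Prime) (h℘odd : Odd ℘)
    (hm : 1 ≤ m) (hprim : orderOf (p : ZMod (℘ ^ m)) = (℘ ^ m).totient)
    (F : Type*) [Field F] [Fintype F] [Algebra (ZMod p) F]
    (hcard : Fintype.card F = p ^ (℘ ^ m).totient)
    (ξ : F) (hξ : IsPrimitiveRoot ξ (℘ ^ m)) (a : ZMod p) :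
    (∑ i ∈ Finset.range (℘ ^ m), canChar p F (algebraMap (ZMod p) F a * ξ ^ i)) =
      ((℘ : ℂ) - 1) * Complex.exp (2 * Real.pi * Complex.I / p)
          ^ ((-(a * ((℘ ^ (m - 1) : ℕ) : ZMod p)) : ZMod p)).val
        + Complex.exp (2 * Real.pi * Complex.I / p)
          ^ ((a * (((℘ - 1) * ℘ ^ (m - 1) : ℕ) : ZMod p) : ZMod p)).val
        + (℘ : ℂ) ^ m - (℘ : ℂ) := by
  haveI : Fact p.Prime := ⟨hp⟩
  haveI : NeZero p := ⟨hp.ne_zero⟩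
  haveI : NeZero (℘ ^ m) := ⟨pow_ne_zero _ h℘.ne_zero⟩
  haveI : FiniteDimensional (ZMod p) F := Module.Finite.of_finite
  have hadj := aux_adjoin_top p ℘ m hp h℘ hm hprim F hcard ξ hξ
  have hspec := fun σ => hξ.autToPow_spec (ZMod p) σ
  have hinj : Function.Injective (hξ.autToPow (ZMod p)) := by
    intro σ τ h
    have h1 : σ ξ = τ ξ := by rw [← hspec σ, ← hspec τ, h]
    have h2 : σ.toAlgHom = τ.toAlgHom := by
      apply AlgHom.ext_of_adjoin_eq_top hadj
      intro x hx
      rw [Set.mem_singleton_iff] at hx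
      subst hx
      exact h1
    exact AlgEquiv.coe_algHom_injective h2
  have hfinF : Module.finrank (ZMod p) F = (℘ ^ m).totient := aux_finrank p ℘ m hp F hcard
  have hbij : Function.Bijective (hξ.autToPow (ZMod p)) := by
    rw [Fintype.bijective_iff_injective_and_card]
    refine ⟨hinj, ?_⟩
    rw [ZMod.card_units_eq_totient, ← Nat.card_eq_fintype_card, IsGalois.card_aut_eq_finrank, hfinF]
  have key : ∀ i : ℕ, algebraMap (ZMod p) F (Algebra.trace (ZMod p) F (ξ ^ i)) =
      (∑ j ∈ range (℘ ^ m), (ξ ^ i) ^ j)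
        - ∑ t ∈ range (℘ ^ (m - 1)), ((ξ ^ i) ^ ℘) ^ t := by
    intro i
    rw [trace_eq_sum_automorphisms, ← aux_units_sum ℘ m h℘ hm (ξ ^ i)]
    refine Fintype.sum_bijective _ hbij _ _ (fun σ => ?_)
    rw [map_pow, ← hspec σ, ← pow_mul, pow_mul']
  have hηN : ∀ i : ℕ, (ξ ^ i) ^ (℘ ^ m) = 1 := by
    intro i
    rw [← pow_mul, mul_comm, pow_mul, hξ.pow_eq_one, one_pow]
  have hTr0 : Algebra.trace (ZMod p) F (ξ ^ (0 : ℕ))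
      = (((℘ - 1) * ℘ ^ (m - 1) : ℕ) : ZMod p) := by
    apply (algebraMap (ZMod p) F).injective
    rw [key 0, map_natCast]
    simp only [pow_zero, one_pow, Finset.sum_const, Finset.card_range, nsmul_eq_mul, mul_one]
    have hle : ℘ ^ (m - 1) ≤ ℘ ^ m := Nat.pow_le_pow_right h℘.one_le (Nat.sub_le m 1)
    have heq : (℘ - 1) * ℘ ^ (m - 1) = ℘ ^ m - ℘ ^ (m - 1) := by
      rw [Nat.sub_one_mul, ← aux_pow_split hm]
    rw [heq, Nat.cast_sub hle]
  have hTrP : ∀ i : ℕ, ℘ ^ (m - 1) ∣ i → i ≠ 0 → i < ℘ ^ m →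
      Algebra.trace (ZMod p) F (ξ ^ i) = -((℘ ^ (m - 1) : ℕ) : ZMod p) := by
    intro i hdvd hne hlt
    apply (algebraMap (ZMod p) F).injective
    rw [key i, map_neg, map_natCast]
    have hη1 : ξ ^ i ≠ 1 := hξ.pow_ne_one_of_pos_of_lt hne hlt
    have hη℘ : (ξ ^ i) ^ ℘ = 1 := by
      rw [← pow_mul, hξ.pow_eq_one_iff_dvd]
      obtain ⟨k, rfl⟩ := hdvd
      exact ⟨k, by rw [aux_pow_split hm]; ring⟩
    rw [aux_geom hη1 (hηN i)]
    simp [hη℘]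
  have hTrZ : ∀ i : ℕ, ¬ (℘ ^ (m - 1) ∣ i) → i < ℘ ^ m →
      Algebra.trace (ZMod p) F (ξ ^ i) = 0 := by
    intro i hdvd hlt
    apply (algebraMap (ZMod p) F).injective
    rw [key i, map_zero]
    have hne : i ≠ 0 := by rintro rfl; exact hdvd (dvd_zero _)
    have hη1 : ξ ^ i ≠ 1 := hξ.pow_ne_one_of_pos_of_lt hne hlt
    have hη℘N : ((ξ ^ i) ^ ℘) ^ (℘ ^ (m - 1)) = 1 := by
      rw [← pow_mul, ← pow_mul, ← aux_pow_split hm, pow_mul]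
      exact hηN i
    have hη℘1 : (ξ ^ i) ^ ℘ ≠ 1 := by
      rw [← pow_mul]
      intro hdd'
      have hdd := (hξ.pow_eq_one_iff_dvd _).mp hdd'
      apply hdvd
      rw [aux_pow_split hm, mul_comm ℘ (℘ ^ (m - 1))] at hdd
      exact (Nat.mul_dvd_mul_iff_right h℘.pos).mp hdd
    rw [aux_geom hη1 (hηN i), aux_geom hη℘1 hη℘N, sub_zero]
  have hchar : ∀ i : ℕ, canChar p F (algebraMap (ZMod p) F a * ξ ^ i)
      = Complex.exp (2 * Real.pi * Complex.I / p)
          ^ (a * Algebra.trace (ZMod p) F (ξ ^ i)).val := by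
    intro i
    unfold canChar
    rw [← Algebra.smul_def, map_smul, smul_eq_mul]
  -- split the sum
  have hsplit := Finset.sum_filter_add_sum_filter_not (Finset.range (℘ ^ m))
    (fun i => ℘ ^ (m - 1) ∣ i) (fun i => canChar p F (algebraMap (ZMod p) F a * ξ ^ i))
  have hinj' : Function.Injective (fun t : ℕ => ℘ ^ (m - 1) * t) := fun s t h =>
    Nat.eq_of_mul_eq_mul_left (pow_pos h℘.pos _) h
  have himg : (range (℘ ^ m)).filter (fun i => ℘ ^ (m - 1) ∣ i)
      = (range ℘).image (fun t => ℘ ^ (m - 1) * t) := by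
    ext i
    simp only [mem_filter, mem_range, mem_image]
    constructor
    · rintro ⟨hlt, k, rfl⟩
      refine ⟨k, ?_, rfl⟩
      rw [aux_pow_split hm, mul_comm ℘ (℘ ^ (m - 1))] at hlt
      exact lt_of_mul_lt_mul_left hlt (Nat.zero_le _)
    · rintro ⟨t, ht, rfl⟩
      refine ⟨?_, Dvd.intro _ rfl⟩
      rw [aux_pow_split hm, mul_comm ℘ (℘ ^ (m - 1))]
      exact (Nat.mul_lt_mul_left (pow_pos h℘.pos _)).mpr ht
  have hcardf : ((range (℘ ^ m)).filter (fun i => ℘ ^ (m - 1) ∣ i)).card = ℘ := by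
    rw [himg, Finset.card_image_of_injective _ hinj', Finset.card_range]
  have hcardnf : ((range (℘ ^ m)).filter (fun i => ¬ ℘ ^ (m - 1) ∣ i)).card = ℘ ^ m - ℘ := by
    have h := Finset.card_filter_add_card_filter_not (s := range (℘ ^ m))
      (p := fun i => ℘ ^ (m - 1) ∣ i)
    rw [Finset.card_range, hcardf] at h
    omega
  -- the sum over non-divisible indices
  have hsum2 : ∑ i ∈ (range (℘ ^ m)).filter (fun i => ¬ ℘ ^ (m - 1) ∣ i),
      canChar p F (algebraMap (ZMod p) F a * ξ ^ i) = ((℘ ^ m - ℘ : ℕ) : ℂ) := by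
    rw [Finset.sum_congr rfl (fun i hi => ?_), Finset.sum_const, hcardnf, nsmul_eq_mul, mul_one]
    simp only [mem_filter, mem_range] at hi
    rw [hchar i, hTrZ i hi.2 hi.1]
    simp
  -- the sum over divisible indices
  have hsum1 : ∑ i ∈ (range (℘ ^ m)).filter (fun i => ℘ ^ (m - 1) ∣ i),
      canChar p F (algebraMap (ZMod p) F a * ξ ^ i)
      = Complex.exp (2 * Real.pi * Complex.I / p)
          ^ ((a * (((℘ - 1) * ℘ ^ (m - 1) : ℕ) : ZMod p) : ZMod p)).val
        + ((℘ - 1 : ℕ) : ℂ) * Complex.exp (2 * Real.pi * Complex.I / p)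
          ^ ((-(a * ((℘ ^ (m - 1) : ℕ) : ZMod p)) : ZMod p)).val := by
    rw [himg, Finset.sum_image (fun s _ t _ h => hinj' h)]
    have h℘eq : ℘ = (℘ - 1) + 1 := (Nat.succ_pred_eq_of_pos h℘.pos).symm
    rw [show range ℘ = range ((℘ - 1) + 1) from by rw [← h℘eq], Finset.sum_range_succ']
    have hfirst : ∀ t ∈ range (℘ - 1),
        canChar p F (algebraMap (ZMod p) F a * ξ ^ (℘ ^ (m - 1) * (t + 1)))
        = Complex.exp (2 * Real.pi * Complex.I / p)
          ^ ((-(a * ((℘ ^ (m - 1) : ℕ) : ZMod p)) : ZMod p)).val := by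
      intro t ht
      rw [mem_range] at ht
      have hlt : ℘ ^ (m - 1) * (t + 1) < ℘ ^ m := by
        rw [aux_pow_split hm, mul_comm ℘ (℘ ^ (m - 1))]
        exact (Nat.mul_lt_mul_left (pow_pos h℘.pos _)).mpr (by omega)
      have hne : ℘ ^ (m - 1) * (t + 1) ≠ 0 :=
        Nat.mul_ne_zero (pow_pos h℘.pos _).ne' (Nat.succ_ne_zero t)
      rw [hchar _, hTrP _ (Dvd.intro _ rfl) hne hlt, mul_neg]
    rw [Finset.sum_congr rfl hfirst, Finset.sum_const, Finset.card_range, nsmul_eq_mul]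
    rw [mul_zero, hchar 0, hTr0]
    ring
  rw [← hsplit, hsum1, hsum2]
  have h1 : ((℘ - 1 : ℕ) : ℂ) = (℘ : ℂ) - 1 := by
    rw [Nat.cast_sub h℘.one_le, Nat.cast_one]
  have h2 : ((℘ ^ m - ℘ : ℕ) : ℂ) = (℘ : ℂ) ^ m - (℘ : ℂ) := by
    rw [Nat.cast_sub (Nat.le_self_pow (by omega) ℘), Nat.cast_pow]
  rw [h1, h2]
  ring
end

section
/- Let ℘ be an odd prime such that 3 is a primitive root modulo ℘^m, q = 3^{φ(℘^m)}, and Tr the trace from 𝔽_q to 𝔽_3. Then the cardinality of D = {x ∈ 𝔽_q^* : Tr(x^{(q−1)/℘^m}) = 0} equals ((q−1)/℘^m)·(℘^m − ℘ + 1) if ℘ ≡ 1 (mod 3), and equals ((q−1)/℘^m)·(℘^m − ℘) if ℘ ≡ −1 (mod 3). -/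
open Finset Polynomial

lemma aux_pow_eq {G : Type*} [Group G] [Finite G] {g : G}
    (h : orderOf g = Nat.card G) (v : G) : ∃ k : ℕ, g ^ k = v := by
  have hmem : v ∈ Subgroup.zpowers g := by
    have htop : Subgroup.zpowers g = ⊤ := by
      have : Nat.card (Subgroup.zpowers g) = Nat.card G := by
        rw [Nat.card_zpowers, h]
      exact Subgroup.eq_top_of_card_eq _ this
    rw [htop]; trivial
  exact (isOfFinOrder_of_finite g).mem_powers_iff_mem_zpowers.mpr hmem

lemma aux_trace_formula {F : Type*} [Field F] [Fintype F] [DecidableEq F] [Algebra (ZMod 3) F]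
    {f : ℕ} (hcard : Fintype.card F = 3 ^ f) (x : F) :
    algebraMap (ZMod 3) F (Algebra.trace (ZMod 3) F x) = ∑ i ∈ Finset.range f, x ^ 3 ^ i := by
  haveI : Fact (Nat.Prime 3) := ⟨by norm_num⟩
  haveI hch : CharP F 3 := (Algebra.charP_iff (ZMod 3) F 3).mp (ZMod.charP 3)
  haveI : FiniteDimensional (ZMod 3) F := Module.Finite.of_basis (IsNoetherian.finsetBasis (ZMod 3) F)
  have hf0 : 0 < f := by
    by_contra h
    interval_cases f
    · have := Fintype.one_lt_card (α := F); omega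
  have hfr : Module.finrank (ZMod 3) F = f := by
    have h1 := Module.card_eq_pow_finrank (K := ZMod 3) (V := F)
    rw [hcard, ZMod.card] at h1
    exact Nat.pow_right_injective (by norm_num) h1.symm
  -- frobenius as an AlgEquiv
  let φ : F ≃ₐ[ZMod 3] F := AlgEquiv.ofBijective
    { toRingHom := frobenius F 3,
      commutes' := fun r => by
        show (algebraMap (ZMod 3) F r) ^ 3 = algebraMap (ZMod 3) F r
        rw [← map_pow, ZMod.pow_card] }
    ((Finite.injective_iff_bijective).mp (frobenius_inj F 3))
  have hφ : ∀ y : F, φ y = y ^ 3 := fun y => rfl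
  have hφpow : ∀ (i : ℕ) (y : F), (φ ^ i) y = y ^ 3 ^ i := by
    intro i
    induction i with
    | zero => intro y; simp
    | succ i ih =>
      intro y
      rw [pow_succ, AlgEquiv.mul_apply, hφ, ih, ← pow_mul, pow_succ, mul_comm]
  have hφf : φ ^ f = 1 := by
    ext y
    rw [hφpow, ← hcard, FiniteField.pow_card, AlgEquiv.one_apply]
  have horder : orderOf φ = f := by
    have hdvd : orderOf φ ∣ f := orderOf_dvd_of_pow_eq_one hφf
    have hpos : 0 < orderOf φ := by
      rw [orderOf_pos_iff]
      exact isOfFinOrder_iff_pow_eq_one.mpr ⟨f, hf0, hφf⟩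
    rcases lt_or_eq_of_le (Nat.le_of_dvd hf0 hdvd) with hlt | heq
    · exfalso
      obtain ⟨g, hg⟩ := IsCyclic.exists_ofOrder_eq_natCard (α := Fˣ)
      have hgc : orderOf g = Fintype.card F - 1 := by
        rw [hg, Nat.card_eq_fintype_card, Fintype.card_units]
      set t := orderOf φ with ht
      have h1 : ((g : F)) ^ 3 ^ t = (g : F) := by
        have := pow_orderOf_eq_one φ
        have h2 : (φ ^ t) (g : F) = (1 : F ≃ₐ[ZMod 3] F) (g : F) := by rw [this]
        rw [hφpow, AlgEquiv.one_apply] at h2; exact h2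
      have h3 : (g : F) ^ (3 ^ t - 1) = 1 := by
        have hne : (g : F) ≠ 0 := Units.ne_zero g
        have h4 : (g : F) ^ (3 ^ t - 1) * (g:F) = 1 * (g:F) := by
          rw [one_mul, ← pow_succ]
          have : 3 ^ t - 1 + 1 = 3 ^ t := by
            have : 0 < 3 ^ t := pow_pos (by norm_num) t
            omega
          rw [this, h1]
        exact mul_right_cancel₀ hne h4
      have h5 : g ^ (3 ^ t - 1) = 1 := by
        ext
        push_cast
        exact h3
      have h6 : orderOf g ∣ 3 ^ t - 1 := orderOf_dvd_of_pow_eq_one h5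
      rw [hgc] at h6
      have h7 : 0 < 3 ^ t - 1 := by
        have : (3:ℕ) ^ 0 < 3 ^ t := Nat.pow_lt_pow_right (by norm_num) hpos
        simpa using this
      have h8 := Nat.le_of_dvd h7 h6
      have h9 : (3:ℕ) ^ t < 3 ^ f := Nat.pow_lt_pow_right (by norm_num) hlt
      have h10 : 2 ≤ Fintype.card F := Fintype.one_lt_card
      rw [hcard] at h8
      omega
    · exact heq
  -- sum over automorphisms
  rw [trace_eq_sum_automorphisms]
  have hcardG : Fintype.card (F ≃ₐ[ZMod 3] F) = f := by
    rw [← Nat.card_eq_fintype_card, IsGalois.card_aut_eq_finrank, hfr]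
  classical
  have hinj : Set.InjOn (fun i => φ ^ i) ↑(Finset.range f) := by
    intro i hi j hj hij
    exact pow_injOn_Iio_orderOf (by simpa [horder] using hi) (by simpa [horder] using hj) hij
  have himg : (Finset.range f).image (fun i => φ ^ i) = Finset.univ := by
    apply Finset.eq_univ_of_card
    rw [Finset.card_image_of_injOn hinj, Finset.card_range, hcardG]
  rw [← himg, Finset.sum_image (fun i hi j hj h => hinj hi hj h)]
  exact Finset.sum_congr rfl fun i _ => hφpow i x
lemma aux_geom_s15 {F : Type*} [Field F] [DecidableEq F] {x : F} {n : ℕ} (hn : 0 < n) (hx : x ^ n = 1) :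
    ∑ k ∈ Finset.range n, x ^ k = if x = 1 then (n : F) else 0 := by
  split_ifs with h
  · simp [h]
  · rw [geom_sum_eq h, hx, sub_self, zero_div]

lemma aux_char_sum {F : Type*} [Field F] [Fintype F] [DecidableEq F] (℘ m : ℕ)
    (h℘ : ℘.Prime) (h℘3 : ℘ ≠ 3) (hm : 1 ≤ m)
    (hprim : orderOf (3 : ZMod (℘ ^ m)) = (℘ ^ m).totient) {x : F} (hx : x ^ ℘ ^ m = 1) :
    ∑ i ∈ Finset.range ((℘ ^ m).totient), x ^ 3 ^ i =
      (if x = 1 then ((℘ ^ m : ℕ) : F) else 0) -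
        (if x ^ ℘ = 1 then ((℘ ^ (m - 1) : ℕ) : F) else 0) := by
  set n := ℘ ^ m with hn
  set f := n.totient with hfdef
  set n' := ℘ ^ (m - 1) with hn'
  have hn0 : 0 < n := pow_pos h℘.pos m
  haveI : NeZero n := ⟨hn0.ne'⟩
  have hf0 : 0 < f := Nat.totient_pos.mpr hn0
  have hn℘ : n = n' * ℘ := by rw [hn, hn', ← pow_succ]; congr 1; omega
  have h℘dvd : ℘ ∣ n := Dvd.intro_left n' hn℘.symm
  have htrunc : ∀ a : ℕ, x ^ a = x ^ (a % n) := by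
    intro a
    conv_lhs => rw [← Nat.div_add_mod a n]
    rw [pow_add, pow_mul, hx, one_pow, one_mul]
  have hunit : IsUnit (3 : ZMod n) := by
    have : IsOfFinOrder (3 : ZMod n) := by
      rw [← orderOf_pos_iff, hprim]; exact hf0
    exact this.isUnit
  -- Step A : reindex
  have stepA : ∑ i ∈ Finset.range f, x ^ 3 ^ i
      = ∑ k ∈ (Finset.range n).filter (fun k => ¬ ℘ ∣ k), x ^ k := by
    refine Finset.sum_bij (fun a _ => 3 ^ a % n) ?_ ?_ ?_ ?_
    · intro a _
      simp only [Finset.mem_filter, Finset.mem_range]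
      refine ⟨Nat.mod_lt _ hn0, fun hdv => ?_⟩
      have h1 : ℘ ∣ 3 ^ a := (Nat.dvd_mod_iff h℘dvd).mp hdv
      have h2 : ℘ ∣ 3 := h℘.dvd_of_dvd_pow h1
      exact h℘3 ((Nat.prime_dvd_prime_iff_eq h℘ (by norm_num)).mp h2)
    · intro a₁ ha₁ a₂ ha₂ hmod
      have hz : ((3 : ZMod n)) ^ a₁ = (3 : ZMod n) ^ a₂ := by
        have : ((3 ^ a₁ : ℕ) : ZMod n) = ((3 ^ a₂ : ℕ) : ZMod n) :=
          (ZMod.natCast_eq_natCast_iff _ _ _).mpr hmod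
        push_cast at this
        exact this
      exact pow_injOn_Iio_orderOf (by simpa [hprim] using Finset.mem_range.mp ha₁)
        (by simpa [hprim] using Finset.mem_range.mp ha₂) hz
    · intro k hk
      simp only [Finset.mem_filter, Finset.mem_range] at hk
      have hck : Nat.Coprime k n := ((h℘.coprime_iff_not_dvd.mpr hk.2).symm).pow_right m
      set u : (ZMod n)ˣ := ZMod.unitOfCoprime k hck with hu
      set u3 : (ZMod n)ˣ := hunit.unit with hu3
      have hu3coe : (u3 : ZMod n) = 3 := IsUnit.unit_spec hunit
      have hord3 : orderOf u3 = f := by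
        rw [← orderOf_units, hu3coe, hprim]
      have hcardU : orderOf u3 = Nat.card (ZMod n)ˣ := by
        rw [hord3, Nat.card_eq_fintype_card, ZMod.card_units_eq_totient]
      obtain ⟨k0, hk0⟩ := aux_pow_eq hcardU u
      refine ⟨k0 % f, Finset.mem_range.mpr (Nat.mod_lt _ hf0), ?_⟩
      have hpow : u3 ^ (k0 % f) = u := by
        rw [← hord3, pow_mod_orderOf, hk0]
      have hcast : ((3 ^ (k0 % f) % n : ℕ) : ZMod n) = (k : ZMod n) := by
        rw [ZMod.natCast_mod]
        push_cast
        rw [← hu3coe, ← Units.val_pow_eq_pow_val, hpow, hu, ZMod.coe_unitOfCoprime]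
      have := congrArg ZMod.val hcast
      rwa [ZMod.val_cast_of_lt (Nat.mod_lt _ hn0), ZMod.val_cast_of_lt hk.1] at this
    · intro a _
      exact htrunc (3 ^ a)
  -- Step B : split off multiples of ℘
  have stepB : ∑ k ∈ (Finset.range n).filter (fun k => ¬ ℘ ∣ k), x ^ k
      = (∑ k ∈ Finset.range n, x ^ k) - ∑ k ∈ (Finset.range n).filter (fun k => ℘ ∣ k), x ^ k := by
    have := Finset.sum_filter_add_sum_filter_not (Finset.range n) (fun k => ℘ ∣ k)
      (fun k => x ^ k)
    exact eq_sub_of_add_eq' this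
  -- Step C : multiples of ℘
  have stepC : ∑ k ∈ (Finset.range n).filter (fun k => ℘ ∣ k), x ^ k
      = ∑ j ∈ Finset.range n', (x ^ ℘) ^ j := by
    refine (Finset.sum_bij (fun j _ => ℘ * j) ?_ ?_ ?_ ?_).symm
    · intro j hj
      simp only [Finset.mem_filter, Finset.mem_range] at hj ⊢
      constructor
      · calc ℘ * j < ℘ * n' := (Nat.mul_lt_mul_left h℘.pos).mpr hj
          _ = n := by rw [hn℘, mul_comm]
      · exact Dvd.intro j rfl
    · intro a₁ _ a₂ _ h
      exact Nat.eq_of_mul_eq_mul_left h℘.pos h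
    · intro k hk
      simp only [Finset.mem_filter, Finset.mem_range] at hk
      refine ⟨k / ℘, Finset.mem_range.mpr ?_, Nat.mul_div_cancel' hk.2⟩
      rw [Nat.div_lt_iff_lt_mul h℘.pos, ← hn℘]
      exact hk.1
    · intro j _
      rw [← pow_mul]
  have hxp : (x ^ ℘) ^ n' = 1 := by
    rw [← pow_mul, mul_comm, ← hn℘, hx]
  have hn'0 : 0 < n' := pow_pos h℘.pos _
  rw [stepA, stepB, stepC, aux_geom_s15 hn0 hx, aux_geom_s15 hn'0 hxp]

theorem stmt_15 (℘ m : ℕ) (h℘ : ℘.Prime) (h℘odd : Odd ℘) (hm : 1 ≤ m)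
    (hprim : orderOf (3 : ZMod (℘ ^ m)) = (℘ ^ m).totient)
    (F : Type*) [Field F] [Fintype F] [DecidableEq F] [Algebra (ZMod 3) F]
    (hcard : Fintype.card F = 3 ^ (℘ ^ m).totient) :
    (℘ % 3 = 1 →
      (Finset.univ.filter (fun x : F => x ≠ 0 ∧
          Algebra.trace (ZMod 3) F (x ^ ((Fintype.card F - 1) / ℘ ^ m)) = 0)).card =
        ((Fintype.card F - 1) / ℘ ^ m) * (℘ ^ m - ℘ + 1)) ∧
    (℘ % 3 = 2 →
      (Finset.univ.filter (fun x : F => x ≠ 0 ∧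
          Algebra.trace (ZMod 3) F (x ^ ((Fintype.card F - 1) / ℘ ^ m)) = 0)).card =
        ((Fintype.card F - 1) / ℘ ^ m) * (℘ ^ m - ℘)) := by
  classical
  haveI : Fact (Nat.Prime 3) := ⟨by norm_num⟩
  haveI hch : CharP F 3 := (Algebra.charP_iff (ZMod 3) F 3).mp (ZMod.charP 3)
  have hn0 : 0 < ℘ ^ m := pow_pos h℘.pos m
  haveI : NeZero (℘ ^ m) := ⟨hn0.ne'⟩
  have hf0 : 0 < (℘ ^ m).totient := Nat.totient_pos.mpr hn0
  have hunit : IsUnit (3 : ZMod (℘ ^ m)) := by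
    have : IsOfFinOrder (3 : ZMod (℘ ^ m)) := by rw [← orderOf_pos_iff, hprim]; exact hf0
    exact this.isUnit
  have h℘3 : ℘ ≠ 3 := by
    rintro rfl
    have hcop := (ZMod.isUnit_iff_coprime 3 (3 ^ m)).mp (by exact_mod_cast hunit)
    have h3 : (3:ℕ) ∣ 3 ^ m := dvd_pow_self 3 (by omega)
    exact absurd hcop (by simp [Nat.Prime.coprime_iff_not_dvd (by norm_num : Nat.Prime 3), h3])
  have h3℘ : ¬ (3:ℕ) ∣ ℘ := fun h =>
    h℘3 ((Nat.prime_dvd_prime_iff_eq (by norm_num) h℘).mp h).symm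
  have hq1 : 1 < Fintype.card F := Fintype.one_lt_card
  have hdvd : ℘ ^ m ∣ Fintype.card F - 1 := by
    have h3f : ((3 : ZMod (℘ ^ m))) ^ (℘ ^ m).totient = 1 := by
      have := pow_orderOf_eq_one (3 : ZMod (℘ ^ m)); rwa [hprim] at this
    have hz : ((Fintype.card F - 1 : ℕ) : ZMod (℘ ^ m)) = 0 := by
      have h1 : (1:ℕ) ≤ 3 ^ (℘ ^ m).totient := Nat.one_le_pow _ _ (by norm_num)
      rw [hcard, Nat.cast_sub h1]
      push_cast
      rw [h3f, sub_self]
    exact (ZMod.natCast_eq_zero_iff _ _).mp hz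
  set d := (Fintype.card F - 1) / ℘ ^ m with hd
  have hdn : d * ℘ ^ m = Fintype.card F - 1 := Nat.div_mul_cancel hdvd
  have hd0 : 0 < d := Nat.div_pos (Nat.le_of_dvd (by omega) hdvd) hn0
  -- generator
  obtain ⟨g, hg⟩ := IsCyclic.exists_ofOrder_eq_natCard (α := Fˣ)
  have hgord : orderOf g = Fintype.card F - 1 := by
    rw [hg, Nat.card_eq_fintype_card, Fintype.card_units]
  have hgprim : IsPrimitiveRoot ((g : F)) (Fintype.card F - 1) := by
    have h1 : orderOf ((g:F)) = Fintype.card F - 1 := by rw [orderOf_units, hgord]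
    exact h1 ▸ IsPrimitiveRoot.orderOf (g : F)
  have hcardroots : ∀ k, 0 < k → k ∣ Fintype.card F - 1 → (nthRootsFinset k (1 : F)).card = k := by
    intro k hk hkd
    obtain ⟨e, he⟩ := hkd
    exact (hgprim.pow (by omega) (by rw [he, mul_comm])).card_nthRootsFinset
  -- trace characterization on roots
  have htr : ∀ y : F, y ^ ℘ ^ m = 1 →
      (Algebra.trace (ZMod 3) F y = 0 ↔
        ((if y = 1 then ((℘ ^ m : ℕ) : F) else 0) -
          (if y ^ ℘ = 1 then ((℘ ^ (m - 1) : ℕ) : F) else 0) = 0)) := by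
    intro y hy
    rw [← aux_char_sum ℘ m h℘ h℘3 hm hprim hy, ← aux_trace_formula hcard y]
    exact (map_eq_zero_iff _ (algebraMap (ZMod 3) F).injective).symm
  have hcast' : ((℘ ^ (m - 1) : ℕ) : F) ≠ 0 := by
    intro h0
    rw [CharP.cast_eq_zero_iff F 3] at h0
    exact h3℘ (Nat.Prime.dvd_of_dvd_pow (by norm_num) h0)
  set S := (nthRootsFinset (℘ ^ m) (1 : F)).filter
    (fun y => Algebra.trace (ZMod 3) F y = 0) with hS
  -- the main fiber counting
  have hmem : ∀ x ∈ Finset.univ.filter (fun x : F => x ≠ 0 ∧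
      Algebra.trace (ZMod 3) F (x ^ d) = 0), x ^ d ∈ S := by
    intro x hx
    simp only [Finset.mem_filter, Finset.mem_univ, true_and] at hx
    refine Finset.mem_filter.mpr ⟨?_, hx.2⟩
    rw [mem_nthRootsFinset hn0, ← pow_mul, hdn]
    exact FiniteField.pow_card_sub_one_eq_one x hx.1
  have hfib : ∀ y ∈ S, ((Finset.univ.filter (fun x : F => x ≠ 0 ∧
      Algebra.trace (ZMod 3) F (x ^ d) = 0)).filter (fun x => x ^ d = y)).card = d := by
    intro y hyS
    obtain ⟨hyR, hytr⟩ := Finset.mem_filter.mp hyS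
    have hy1 : y ^ ℘ ^ m = 1 := (mem_nthRootsFinset hn0 _).mp hyR
    have hy0 : y ≠ 0 := ne_zero_of_mem_nthRootsFinset one_ne_zero hyR
    have hset : ((Finset.univ.filter (fun x : F => x ≠ 0 ∧
        Algebra.trace (ZMod 3) F (x ^ d) = 0)).filter (fun x => x ^ d = y)) =
        Finset.univ.filter (fun x : F => x ^ d = y) := by
      ext x
      simp only [Finset.mem_filter, Finset.mem_univ, true_and]
      constructor
      · rintro ⟨_, h⟩; exact h
      · intro h
        refine ⟨⟨?_, ?_⟩, h⟩
        · rintro rfl; rw [zero_pow hd0.ne'] at h; exact hy0 h.symm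
        · rw [h]; exact hytr
    rw [hset]
    -- find a d-th root of y
    obtain ⟨k, hk⟩ := aux_pow_eq (g := g) (by rw [hg]) (Units.mk0 y hy0)
    have hyk : (g : F) ^ k = y := by
      rw [← Units.val_pow_eq_pow_val, hk]; rfl
    have hkn : (Fintype.card F - 1) ∣ k * ℘ ^ m := by
      rw [← hgord]
      apply orderOf_dvd_of_pow_eq_one
      ext
      push_cast
      rw [pow_mul, hyk, hy1]
    have hdk : d ∣ k := by
      rw [← hdn] at hkn
      exact (Nat.mul_dvd_mul_iff_right hn0).mp hkn
    set x₀ : F := (g : F) ^ (k / d) with hx₀def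
    have hx₀ : x₀ ^ d = y := by
      rw [hx₀def, ← pow_mul, Nat.div_mul_cancel hdk, hyk]
    have hx₀0 : x₀ ≠ 0 := pow_ne_zero _ (Units.ne_zero g)
    have hbij : (nthRootsFinset d (1 : F)).card =
        (Finset.univ.filter (fun x : F => x ^ d = y)).card := by
      refine Finset.card_bij (fun z _ => z * x₀) ?_ ?_ ?_
      · intro z hz
        simp only [Finset.mem_filter, Finset.mem_univ, true_and]
        rw [mul_pow, (mem_nthRootsFinset hd0 _).mp hz, one_mul, hx₀]
      · intro z₁ _ z₂ _ h
        exact mul_right_cancel₀ hx₀0 h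
      · intro x hx
        simp only [Finset.mem_filter, Finset.mem_univ, true_and] at hx
        refine ⟨x * x₀⁻¹, ?_, ?_⟩
        · rw [mem_nthRootsFinset hd0, mul_pow, hx, inv_pow, hx₀, mul_inv_cancel₀ hy0]
        · show x * x₀⁻¹ * x₀ = x
          rw [mul_assoc, inv_mul_cancel₀ hx₀0, mul_one]
    rw [← hbij, hcardroots d hd0 ⟨℘ ^ m, hdn.symm⟩]
  have main : (Finset.univ.filter (fun x : F => x ≠ 0 ∧
      Algebra.trace (ZMod 3) F (x ^ d) = 0)).card = d * S.card := by
    rw [Finset.card_eq_sum_card_fiberwise hmem, Finset.sum_congr rfl hfib,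
      Finset.sum_const, smul_eq_mul, mul_comm]
  -- root counts
  have hmm : ℘ ^ m = ℘ * ℘ ^ (m - 1) := by
    conv_lhs => rw [show m = (m - 1) + 1 by omega]
    rw [pow_succ']
  have hfilt℘ : (nthRootsFinset (℘ ^ m) (1 : F)).filter (fun y => y ^ ℘ = 1) =
      nthRootsFinset ℘ (1 : F) := by
    ext y
    simp only [Finset.mem_filter, mem_nthRootsFinset hn0, mem_nthRootsFinset h℘.pos]
    constructor
    · rintro ⟨_, h⟩; exact h
    · intro h
      refine ⟨?_, h⟩
      rw [hmm, pow_mul, h, one_pow]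
  have h℘q : ℘ ∣ Fintype.card F - 1 := dvd_trans (dvd_pow_self ℘ (by omega)) hdvd
  have hcard℘ : (nthRootsFinset ℘ (1 : F)).card = ℘ := hcardroots ℘ h℘.pos h℘q
  have hcardR : (nthRootsFinset (℘ ^ m) (1 : F)).card = ℘ ^ m := hcardroots _ hn0 hdvd
  have h1R : (1:F) ∈ nthRootsFinset ℘ (1 : F) := one_mem_nthRootsFinset h℘.pos
  have h℘le : ℘ ≤ ℘ ^ m := Nat.le_self_pow (by omega) ℘
  have hScompl : S.card = ℘ ^ m -
      ((nthRootsFinset (℘ ^ m) (1 : F)).filter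
        (fun y => ¬ Algebra.trace (ZMod 3) F y = 0)).card := by
    have := Finset.card_filter_add_card_filter_not
      (s := nthRootsFinset (℘ ^ m) (1 : F)) (p := fun y => Algebra.trace (ZMod 3) F y = 0)
    rw [hcardR] at this
    rw [hS]
    omega
  constructor
  · -- case ℘ % 3 = 1
    intro hmod
    have hc1 : ((℘ ^ m : ℕ) : F) = ((℘ ^ (m - 1) : ℕ) : F) := by
      have hle : ℘ ^ (m - 1) ≤ ℘ ^ m := Nat.pow_le_pow_right h℘.pos (by omega)
      have hdvd3 : (3:ℕ) ∣ ℘ ^ m - ℘ ^ (m - 1) := by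
        have heq : ℘ ^ m - ℘ ^ (m - 1) = ℘ ^ (m - 1) * (℘ - 1) := by
          have h1 : ℘ ^ m = ℘ ^ (m - 1) * ℘ := by
            rw [← pow_succ]; congr 1; omega
          rw [h1, Nat.mul_sub, mul_one]
        rw [heq]
        exact Dvd.dvd.mul_left (by omega) _
      have : ((℘ ^ m - ℘ ^ (m - 1) : ℕ) : F) = 0 :=
        (CharP.cast_eq_zero_iff F 3 _).mpr hdvd3
      rw [Nat.cast_sub hle] at this
      exact sub_eq_zero.mp this
    have hcompl : (nthRootsFinset (℘ ^ m) (1 : F)).filter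
        (fun y => ¬ Algebra.trace (ZMod 3) F y = 0) = (nthRootsFinset ℘ (1 : F)).erase 1 := by
      ext y
      simp only [Finset.mem_filter, Finset.mem_erase]
      constructor
      · rintro ⟨hyR, hyt⟩
        have hy1 := (mem_nthRootsFinset hn0 _).mp hyR
        rw [htr y hy1] at hyt
        by_cases hy℘ : y ^ ℘ = 1
        · by_cases hyone : y = 1
          · exfalso; apply hyt; rw [if_pos hyone, if_pos hy℘, hc1, sub_self]
          · exact ⟨hyone, (mem_nthRootsFinset h℘.pos _).mpr hy℘⟩
        · exfalso; apply hyt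
          rw [if_neg (fun hyone => hy℘ (by rw [hyone, one_pow])), if_neg hy℘, sub_self]
      · rintro ⟨hyone, hy℘mem⟩
        have hy℘ := (mem_nthRootsFinset h℘.pos _).mp hy℘mem
        have hyR : y ∈ nthRootsFinset (℘ ^ m) (1 : F) := by
          rw [mem_nthRootsFinset hn0, hmm, pow_mul, hy℘, one_pow]
        refine ⟨hyR, ?_⟩
        rw [htr y ((mem_nthRootsFinset hn0 _).mp hyR), if_neg hyone, if_pos hy℘]
        simp only [zero_sub, neg_eq_zero]
        exact hcast'
    rw [main, hScompl, hcompl, Finset.card_erase_of_mem h1R, hcard℘]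
    congr 1
    omega
  · -- case ℘ % 3 = 2
    intro hmod
    have hc2 : ((℘ ^ m : ℕ) : F) - ((℘ ^ (m - 1) : ℕ) : F) ≠ 0 := by
      have hle : ℘ ^ (m - 1) ≤ ℘ ^ m := Nat.pow_le_pow_right h℘.pos (by omega)
      rw [← Nat.cast_sub hle]
      intro h0
      rw [CharP.cast_eq_zero_iff F 3] at h0
      have heq : ℘ ^ m - ℘ ^ (m - 1) = ℘ ^ (m - 1) * (℘ - 1) := by
        have h1 : ℘ ^ m = ℘ ^ (m - 1) * ℘ := by
          rw [← pow_succ]; congr 1; omega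
        rw [h1, Nat.mul_sub, mul_one]
      rw [heq] at h0
      rcases (Nat.Prime.dvd_mul (by norm_num)).mp h0 with h | h
      · exact h3℘ (Nat.Prime.dvd_of_dvd_pow (by norm_num) h)
      · omega
    have hcompl : (nthRootsFinset (℘ ^ m) (1 : F)).filter
        (fun y => ¬ Algebra.trace (ZMod 3) F y = 0) = nthRootsFinset ℘ (1 : F) := by
      ext y
      simp only [Finset.mem_filter]
      constructor
      · rintro ⟨hyR, hyt⟩
        have hy1 := (mem_nthRootsFinset hn0 _).mp hyR
        rw [htr y hy1] at hyt
        by_cases hy℘ : y ^ ℘ = 1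
        · exact (mem_nthRootsFinset h℘.pos _).mpr hy℘
        · exfalso; apply hyt
          rw [if_neg (fun hyone => hy℘ (by rw [hyone, one_pow])), if_neg hy℘, sub_self]
      · intro hy℘mem
        have hy℘ := (mem_nthRootsFinset h℘.pos _).mp hy℘mem
        have hyR : y ∈ nthRootsFinset (℘ ^ m) (1 : F) := by
          rw [mem_nthRootsFinset hn0, hmm, pow_mul, hy℘, one_pow]
        refine ⟨hyR, ?_⟩
        rw [htr y ((mem_nthRootsFinset hn0 _).mp hyR), if_pos hy℘]
        by_cases hyone : y = 1
        · rw [if_pos hyone]; exact hc2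
        · rw [if_neg hyone]; simp only [zero_sub, neg_eq_zero]; exact hcast'
    rw [main, hScompl, hcompl, hcard℘]
end

section
/- Let ℘ be an odd prime with 3 a primitive root modulo ℘^m where m ≥ 2, q = 3^{φ(℘^m)}, D = {x ∈ 𝔽_q^* : Tr(x^{(q−1)/℘^m}) = 0}, and 𝒞_D the associated ternary code with defining set D. Then the minimum distance of the dual code 𝒞_D^⊥ equals 2. -/
private lemma geom_zero {F : Type*} [Field F] {ζ : F} {N : ℕ} (h1 : ζ ≠ 1) (hN : ζ ^ N = 1) :
    ∑ j ∈ Finset.range N, ζ ^ j = 0 := by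
  have := geom_sum_mul ζ N
  rw [hN, sub_self] at this
  rcases mul_eq_zero.mp this with h | h
  · exact h
  · exact absurd (sub_eq_zero.mp h) h1

private noncomputable def frobAE (F : Type*) [Field F] [Fintype F] [Algebra (ZMod 3) F] :
    F ≃ₐ[ZMod 3] F := by
  haveI : Fact (Nat.Prime 3) := ⟨by norm_num⟩
  haveI : CharP F 3 := charP_of_injective_algebraMap (algebraMap (ZMod 3) F).injective 3
  exact AlgEquiv.ofBijective
    { toRingHom := frobenius F 3
      commutes' := fun c => by
        simp [frobenius_def, ← map_pow, ZMod.pow_card] }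
    ((Finite.injective_iff_bijective).mp (frobenius_inj F 3))

private lemma frobAE_pow (F : Type*) [Field F] [Fintype F] [Algebra (ZMod 3) F] (i : ℕ) (x : F) :
    (frobAE F ^ i) x = x ^ 3 ^ i := by
  induction i generalizing x with
  | zero => simp
  | succ k ih =>
    have h1 : (frobAE F) x = x ^ 3 := rfl
    rw [pow_succ, AlgEquiv.mul_apply, ih, h1, ← pow_mul, pow_succ']

private lemma trace_zeta_zero (℘ m : ℕ) (h℘ : ℘.Prime) (hm : 2 ≤ m)
    (hprim : orderOf (3 : ZMod (℘ ^ m)) = (℘ ^ m).totient)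
    (F : Type*) [Field F] [Fintype F] [Algebra (ZMod 3) F]
    (hcard : Fintype.card F = 3 ^ (℘ ^ m).totient)
    (ζ : F) (hζ : orderOf ζ = ℘ ^ m) :
    Algebra.trace (ZMod 3) F ζ = 0 := by
  classical
  haveI : Fact (Nat.Prime 3) := ⟨by norm_num⟩
  set n := (℘ ^ m).totient with hn
  have h℘pos : 0 < ℘ := h℘.pos
  have h℘m1 : 1 < ℘ ^ m := Nat.one_lt_pow (by omega) h℘.one_lt
  haveI : NeZero (℘ ^ m) := ⟨by omega⟩
  haveI : Fact (1 < ℘ ^ m) := ⟨h℘m1⟩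
  have hn_pos : 0 < n := Nat.totient_pos.mpr (by omega)
  have h3n : (3 : ZMod (℘ ^ m)) ^ n = 1 := hprim ▸ pow_orderOf_eq_one _
  have hζpow : ζ ^ ℘ ^ m = 1 := hζ ▸ pow_orderOf_eq_one ζ
  have hζne1 : ζ ≠ 1 := by
    intro h; rw [h, orderOf_one] at hζ; omega
  -- ℘ ≠ 3
  have h℘3 : ℘ ≠ 3 := by
    intro h
    subst h
    have h0 : ((3 : ℕ) : ZMod (3 ^ m)) ^ m = 0 := by
      rw [← Nat.cast_pow, ZMod.natCast_self]
    have hmn : m ≤ n := by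
      have h8 : m - 1 < 3 ^ (m - 1) := Nat.lt_pow_self (by norm_num)
      have h2 : n = 3 ^ (m - 1) * 2 := by
        rw [hn, Nat.totient_prime_pow (by norm_num) (by omega)]
      omega
    have hz : (3 : ZMod (3 ^ m)) ^ n = 0 := by
      have hsplit : (3 : ZMod (3 ^ m)) ^ n = (3 : ZMod (3 ^ m)) ^ m * 3 ^ (n - m) := by
        rw [← pow_add]; congr 1; omega
      rw [hsplit]
      push_cast at h0
      rw [h0, zero_mul]
    rw [h3n] at hz
    exact one_ne_zero hz
  -- finrank
  have hfr : Module.finrank (ZMod 3) F = n := by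
    have h := Module.card_eq_pow_finrank (K := ZMod 3) (V := F)
    rw [hcard, ZMod.card] at h
    exact (Nat.pow_right_injective (by norm_num) h.symm)
  have hcardG : Fintype.card (F ≃ₐ[ZMod 3] F) = n := by
    rw [← Nat.card_eq_fintype_card, IsGalois.card_aut_eq_finrank, hfr]
  set φ := frobAE F with hφ
  have hφpow : ∀ i (x : F), (φ ^ i) x = x ^ 3 ^ i := fun i x => frobAE_pow F i x
  have hφord : orderOf φ = n := by
    have hd1 : orderOf φ ∣ n := hcardG ▸ orderOf_dvd_card
    have hd2 : n ∣ orderOf φ := by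
      set d := orderOf φ with hd
      have hdpos : 0 < d := orderOf_pos φ
      have h1 : (φ ^ d) ζ = ζ := by rw [pow_orderOf_eq_one]; rfl
      rw [hφpow] at h1
      have hζ0 : ζ ≠ 0 := by
        intro h
        rw [h, zero_pow (by omega : ℘ ^ m ≠ 0)] at hζpow
        exact zero_ne_one hζpow
      have h2 : ζ ^ (3 ^ d - 1) = 1 := by
        have h3 : ζ ^ (3 ^ d - 1) * ζ = 1 * ζ := by
          rw [← pow_succ, one_mul]
          have he : 3 ^ d - 1 + 1 = 3 ^ d := by
            have : 0 < 3 ^ d := Nat.pow_pos (by norm_num)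
            omega
          rw [he, h1]
        exact mul_right_cancel₀ hζ0 h3
      have h4 : ℘ ^ m ∣ 3 ^ d - 1 := hζ ▸ orderOf_dvd_of_pow_eq_one h2
      have h5 : (3 : ZMod (℘ ^ m)) ^ d = 1 := by
        have h6 : ((3 ^ d - 1 : ℕ) : ZMod (℘ ^ m)) = 0 :=
          (ZMod.natCast_eq_zero_iff _ _).mpr h4
        have h7 : 0 < 3 ^ d := Nat.pow_pos (by norm_num)
        rw [Nat.cast_sub (by omega : 1 ≤ 3 ^ d)] at h6
        have h8 := sub_eq_zero.mp h6
        push_cast at h8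
        exact h8
      exact hprim ▸ orderOf_dvd_of_pow_eq_one h5
    exact Nat.dvd_antisymm hd1 hd2
  -- sum over automorphisms
  have htrsum : algebraMap (ZMod 3) F (Algebra.trace (ZMod 3) F ζ) =
      ∑ σ : F ≃ₐ[ZMod 3] F, σ ζ := trace_eq_sum_automorphisms ζ
  have hinjφ : ∀ i ∈ Finset.range n, ∀ j ∈ Finset.range n, φ ^ i = φ ^ j → i = j := by
    intro i hi j hj hij
    exact pow_injOn_Iio_orderOf (by simpa [hφord] using Finset.mem_range.mp hi)
      (by simpa [hφord] using Finset.mem_range.mp hj) hij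
  have himg : (Finset.range n).image (fun i => φ ^ i) = Finset.univ := by
    apply Finset.eq_univ_of_card
    rw [Finset.card_image_of_injOn hinjφ, Finset.card_range, hcardG]
  have hsum1 : ∑ σ : F ≃ₐ[ZMod 3] F, σ ζ = ∑ i ∈ Finset.range n, ζ ^ 3 ^ i := by
    rw [← himg, Finset.sum_image hinjφ]
    exact Finset.sum_congr rfl fun i _ => hφpow i ζ
  -- reindex by 3^i % ℘^m
  set T := (Finset.range (℘ ^ m)).filter (fun j => ¬ ℘ ∣ j) with hT
  have hu : IsUnit (3 : ZMod (℘ ^ m)) := by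
    apply IsUnit.of_mul_eq_one ((3 : ZMod (℘ ^ m)) ^ (n - 1))
    rw [← pow_succ']
    have hn1 : n - 1 + 1 = n := by omega
    rw [hn1, h3n]
  obtain ⟨u, hu3⟩ := hu
  have huord : orderOf u = n := by
    rw [← hprim, ← hu3, orderOf_units]
  have hinj : ∀ i ∈ Finset.range n, ∀ j ∈ Finset.range n,
      3 ^ i % ℘ ^ m = 3 ^ j % ℘ ^ m → i = j := by
    intro i hi j hj hij
    have hci : ((3 ^ i : ℕ) : ZMod (℘ ^ m)) = ((3 ^ j : ℕ) : ZMod (℘ ^ m)) := by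
      rw [← ZMod.natCast_mod (3 ^ i), ← ZMod.natCast_mod (3 ^ j), hij]
    have hui : u ^ i = u ^ j := by
      apply Units.ext
      push_cast at hci ⊢
      rw [hu3]
      exact hci
    exact pow_injOn_Iio_orderOf (by simpa [huord] using Finset.mem_range.mp hi)
      (by simpa [huord] using Finset.mem_range.mp hj) hui
  have hTcard : T.card = n := by
    have hTeq : T = (Finset.range (℘ ^ m)).filter ((℘ ^ m).Coprime) := by
      apply Finset.filter_congr
      intro j _
      rw [Nat.coprime_pow_left_iff (by omega : 0 < m), h℘.coprime_iff_not_dvd]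
    rw [hTeq, hn, Nat.totient_eq_card_coprime]
  have himg2 : (Finset.range n).image (fun i => 3 ^ i % ℘ ^ m) = T := by
    apply Finset.eq_of_subset_of_card_le
    · intro j hj
      obtain ⟨i, hi, rfl⟩ := Finset.mem_image.mp hj
      rw [hT, Finset.mem_filter, Finset.mem_range]
      refine ⟨Nat.mod_lt _ (by omega), ?_⟩
      intro hdvd
      have h1 : ℘ ∣ 3 ^ i := by
        have hdm := Nat.div_add_mod (3 ^ i) (℘ ^ m)
        have h2 : ℘ ∣ ℘ ^ m := dvd_pow_self ℘ (by omega)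
        calc ℘ ∣ ℘ ^ m * (3 ^ i / ℘ ^ m) + 3 ^ i % ℘ ^ m :=
              Nat.dvd_add (h2.mul_right _) hdvd
          _ = 3 ^ i := hdm
      exact h℘3 ((Nat.prime_dvd_prime_iff_eq h℘ (by norm_num)).mp (h℘.dvd_of_dvd_pow h1))
    · rw [Finset.card_image_of_injOn hinj, Finset.card_range, hTcard]
  have hsum2 : ∑ i ∈ Finset.range n, ζ ^ 3 ^ i = ∑ j ∈ T, ζ ^ j := by
    rw [← himg2, Finset.sum_image hinj]
    refine Finset.sum_congr rfl fun i _ => ?_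
    rw [← hζ, pow_mod_orderOf]
  -- sum over T is zero
  have hall : ∑ j ∈ Finset.range (℘ ^ m), ζ ^ j = 0 := geom_zero hζne1 hζpow
  have hmul : ∑ j ∈ (Finset.range (℘ ^ m)).filter (fun j => ℘ ∣ j), ζ ^ j = 0 := by
    have h℘m' : ℘ * ℘ ^ (m - 1) = ℘ ^ m := by
      rw [← pow_succ']; congr 1; omega
    have himg3 : (Finset.range (℘ ^ (m - 1))).image (fun k => ℘ * k) =
        (Finset.range (℘ ^ m)).filter (fun j => ℘ ∣ j) := by
      ext j
      simp only [Finset.mem_image, Finset.mem_filter, Finset.mem_range]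
      constructor
      · rintro ⟨k, hk, rfl⟩
        refine ⟨?_, Dvd.intro k rfl⟩
        calc ℘ * k < ℘ * ℘ ^ (m - 1) := by
              exact (Nat.mul_lt_mul_left h℘pos).mpr hk
          _ = ℘ ^ m := h℘m'
      · rintro ⟨hj, k, rfl⟩
        refine ⟨k, ?_, rfl⟩
        rw [← h℘m'] at hj
        exact Nat.lt_of_mul_lt_mul_left hj
    rw [← himg3, Finset.sum_image (fun i _ j _ h => Nat.eq_of_mul_eq_mul_left h℘pos h)]
    have hpm : ∀ k, ζ ^ (℘ * k) = (ζ ^ ℘) ^ k := fun k => by rw [pow_mul]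
    simp_rw [hpm]
    apply geom_zero
    · intro h
      have hdv := orderOf_dvd_of_pow_eq_one h
      rw [hζ] at hdv
      have hle : ℘ ^ m ≤ ℘ := Nat.le_of_dvd h℘pos hdv
      have hlt : ℘ ^ 1 < ℘ ^ m := Nat.pow_lt_pow_right h℘.one_lt (by omega)
      simp at hlt
      omega
    · rw [← pow_mul, h℘m', hζpow]
  have hsum3 : ∑ j ∈ T, ζ ^ j = 0 := by
    have hsplit := Finset.sum_filter_add_sum_filter_not (Finset.range (℘ ^ m))
      (fun j => ℘ ∣ j) (fun j => ζ ^ j)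
    rw [hall, hmul, zero_add] at hsplit
    rw [hT]
    exact hsplit
  have hfin : algebraMap (ZMod 3) F (Algebra.trace (ZMod 3) F ζ) = 0 := by
    rw [htrsum, hsum1, hsum2, hsum3]
  exact (algebraMap (ZMod 3) F).injective (by rw [hfin, map_zero])

theorem stmt_17 (℘ m : ℕ) (h℘ : ℘.Prime) (h℘odd : Odd ℘) (hm : 2 ≤ m)
    (hprim : orderOf (3 : ZMod (℘ ^ m)) = (℘ ^ m).totient)
    (F : Type*) [Field F] [Fintype F] [DecidableEq F] [Algebra (ZMod 3) F]
    (hcard : Fintype.card F = 3 ^ (℘ ^ m).totient) :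
    IsLeast {w : ℕ | ∃ v : {y : F // y ≠ 0 ∧
          Algebra.trace (ZMod 3) F (y ^ ((Fintype.card F - 1) / ℘ ^ m)) = 0} → ZMod 3,
        (∀ x : F, ∑ d, v d * Algebra.trace (ZMod 3) F ((d : F) * x) = 0) ∧ v ≠ 0 ∧
        w = (Finset.univ.filter (fun d => v d ≠ 0)).card} 2 := by
  classical
  haveI : Fact (Nat.Prime 3) := ⟨by norm_num⟩
  haveI : CharP F 3 := charP_of_injective_algebraMap (algebraMap (ZMod 3) F).injective 3
  have h℘pos : 0 < ℘ := h℘.pos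
  have h℘m1 : 1 < ℘ ^ m := Nat.one_lt_pow (by omega) h℘.one_lt
  have hn_pos : 0 < (℘ ^ m).totient := Nat.totient_pos.mpr (by omega)
  have h3n : (3 : ZMod (℘ ^ m)) ^ (℘ ^ m).totient = 1 := hprim ▸ pow_orderOf_eq_one _
  have h3npos : 0 < 3 ^ (℘ ^ m).totient := Nat.pow_pos (by norm_num)
  have h3n1 : 1 < 3 ^ (℘ ^ m).totient := Nat.one_lt_pow (by omega) (by norm_num)
  have hdvd : ℘ ^ m ∣ Fintype.card F - 1 := by
    rw [hcard]
    have h6 : ((3 ^ (℘ ^ m).totient - 1 : ℕ) : ZMod (℘ ^ m)) = 0 := by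
      rw [Nat.cast_sub (by omega : 1 ≤ 3 ^ (℘ ^ m).totient)]
      push_cast
      rw [h3n, sub_self]
    exact (ZMod.natCast_eq_zero_iff _ _).mp h6
  set e := (Fintype.card F - 1) / ℘ ^ m with he
  have hee : ℘ ^ m * e = Fintype.card F - 1 := Nat.mul_div_cancel' hdvd
  have hq1 : 1 < Fintype.card F := by rw [hcard]; exact h3n1
  have hepos : 0 < e := by
    rcases Nat.eq_zero_or_pos e with h | h
    · rw [h, mul_zero] at hee; omega
    · exact h
  have heeven : Even e := by
    have hqodd : Odd (Fintype.card F) := by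
      rw [hcard]; exact Odd.pow ⟨1, by norm_num⟩
    have hev : Even (Fintype.card F - 1) := Nat.Odd.sub_odd hqodd odd_one
    rcases Nat.even_or_odd e with h | h
    · exact h
    · exfalso
      have : Odd (℘ ^ m * e) := (h℘odd.pow).mul h
      rw [hee] at this
      exact (Nat.not_odd_iff_even.mpr hev) this
  obtain ⟨g, hg⟩ := IsCyclic.exists_generator (α := Fˣ)
  have hgord : orderOf g = Fintype.card F - 1 := by
    rw [orderOf_eq_card_of_forall_mem_zpowers hg]
    simpa using Fintype.card_units (α := F)
  have hgeord : orderOf (g ^ e) = ℘ ^ m := by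
    rw [orderOf_pow, hgord]
    have h1 : e ∣ Fintype.card F - 1 := Dvd.intro_left _ hee
    rw [Nat.gcd_eq_right h1, ← hee, Nat.mul_div_cancel _ hepos]
  have hζord : orderOf ((g : F) ^ e) = ℘ ^ m := by
    rw [← Units.val_pow_eq_pow_val, orderOf_units, hgeord]
  have htr : Algebra.trace (ZMod 3) F ((g : F) ^ e) = 0 :=
    trace_zeta_zero ℘ m h℘ hm hprim F hcard _ hζord
  have hg0 : (g : F) ≠ 0 := Units.ne_zero g
  have htrng : Algebra.trace (ZMod 3) F ((-(g : F)) ^ e) = 0 := by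
    rw [heeven.neg_pow]; exact htr
  set D := {y : F // y ≠ 0 ∧
      Algebra.trace (ZMod 3) F (y ^ ((Fintype.card F - 1) / ℘ ^ m)) = 0} with hD
  have hgng : (g : F) ≠ -(g : F) := by
    intro h
    have h2 : (2 : F) * g = 0 := by linear_combination h
    have h2ne : (2 : F) ≠ 0 := by
      intro hh
      rw [show (2 : F) = ((2 : ℕ) : F) by norm_num, CharP.cast_eq_zero_iff F 3 2] at hh
      norm_num at hh
    rcases mul_eq_zero.mp h2 with h' | h'
    · exact h2ne h'
    · exact hg0 h'
  let d₀ : D := ⟨(g : F), hg0, htr⟩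
  let d₁ : D := ⟨-(g : F), neg_ne_zero.mpr hg0, htrng⟩
  have hne : d₀ ≠ d₁ := fun h => hgng (congrArg Subtype.val h)
  constructor
  · -- membership
    refine ⟨fun d => if d = d₀ then 1 else if d = d₁ then 1 else 0, ?_, ?_, ?_⟩
    · intro x
      have hterm : ∀ d : D,
          (if d = d₀ then (1 : ZMod 3) else if d = d₁ then 1 else 0) *
              Algebra.trace (ZMod 3) F ((d : F) * x)
            = (if d = d₀ then Algebra.trace (ZMod 3) F ((g : F) * x) else 0)
              + (if d = d₁ then Algebra.trace (ZMod 3) F ((-(g : F)) * x) else 0) := by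
        intro d
        by_cases h0 : d = d₀
        · subst h0
          simp [hne, d₀]
        · by_cases h1 : d = d₁ <;> simp [h0, h1, Ne.symm hne, d₁]
      rw [Finset.sum_congr rfl (fun d _ => hterm d), Finset.sum_add_distrib,
        Finset.sum_ite_eq' Finset.univ d₀, Finset.sum_ite_eq' Finset.univ d₁]
      simp only [Finset.mem_univ, if_true]
      rw [neg_mul, map_neg, add_neg_cancel]
    · intro h
      have := congrFun h d₀
      simp at this
    · have hfil : (Finset.univ.filter
          (fun d => (if d = d₀ then (1 : ZMod 3) else if d = d₁ then 1 else 0) ≠ 0))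
          = {d₀, d₁} := by
        ext d
        simp only [Finset.mem_filter, Finset.mem_univ, true_and, Finset.mem_insert,
          Finset.mem_singleton]
        by_cases h0 : d = d₀ <;> by_cases h1 : d = d₁ <;> simp [h0, h1]
      rw [hfil, Finset.card_pair hne]
  · -- lower bound
    rintro w ⟨v, hsum, hv, hw⟩
    by_contra hlt
    push_neg at hlt
    interval_cases w
    · have h0 : Finset.univ.filter (fun d => v d ≠ 0) = ∅ :=
        Finset.card_eq_zero.mp hw.symm
      apply hv
      funext d
      by_contra hd
      have hmem : d ∈ Finset.univ.filter (fun d => v d ≠ 0) := by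
        simp only [Finset.mem_filter, Finset.mem_univ, true_and]
        exact hd
      rw [h0] at hmem
      simp at hmem
    · obtain ⟨d₂, hd₂⟩ := Finset.card_eq_one.mp hw.symm
      have hv₂ : v d₂ ≠ 0 := by
        have hmem : d₂ ∈ Finset.univ.filter (fun d => v d ≠ 0) := by
          rw [hd₂]; exact Finset.mem_singleton_self d₂
        simpa using hmem
      have hothers : ∀ d, d ≠ d₂ → v d = 0 := by
        intro d hd
        by_contra h
        have hmem : d ∈ Finset.univ.filter (fun d => v d ≠ 0) := by
          simp only [Finset.mem_filter, Finset.mem_univ, true_and]; exact h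
        rw [hd₂] at hmem
        exact hd (Finset.mem_singleton.mp hmem)
      obtain ⟨z, hz⟩ := Algebra.trace_surjective (ZMod 3) F 1
      have hx := hsum ((d₂ : F)⁻¹ * z)
      rw [Finset.sum_eq_single d₂ (fun d _ hd => by rw [hothers d hd, zero_mul])
        (fun h => absurd (Finset.mem_univ d₂) h)] at hx
      rw [mul_inv_cancel_left₀ d₂.2.1, hz, mul_one] at hx
      exact hv₂ hx
end

section
/- Let p be an odd prime, N a positive integer coprime to p with ord_N(p) = φ(N), q = p^{φ(N)}, and ξ ∈ 𝔽_q a primitive N-th root of unity. Then 𝔽_q = 𝔽_p(ξ), and {ξ, ξ², …, ξ^{φ(N)}} is an 𝔽_p-basis of 𝔽_q. -/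
theorem stmt_19 (p N : ℕ) (hp : p.Prime) (hpodd : Odd p) (hN : 0 < N)
    (hcop : Nat.Coprime p N) (hprim : orderOf (p : ZMod N) = N.totient)
    (F : Type*) [Field F] [Fintype F] [Algebra (ZMod p) F]
    (hcard : Fintype.card F = p ^ N.totient)
    (ξ : F) (hξ : IsPrimitiveRoot ξ N) :
    Algebra.adjoin (ZMod p) {ξ} = ⊤ ∧
    LinearIndependent (ZMod p) (fun i : Fin N.totient => ξ ^ ((i : ℕ) + 1)) ∧
    Submodule.span (ZMod p) (Set.range (fun i : Fin N.totient => ξ ^ ((i : ℕ) + 1))) = ⊤ := by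
  haveI : Fact p.Prime := ⟨hp⟩
  -- finrank of F
  have htot : 0 < N.totient := Nat.totient_pos.mpr hN
  have hfinrank : Module.finrank (ZMod p) F = N.totient := by
    have := Module.card_eq_pow_finrank (K := ZMod p) (V := F)
    rw [ZMod.card, hcard] at this
    exact (Nat.pow_right_injective hp.two_le this.symm)
  set K := Algebra.adjoin (ZMod p) {ξ} with hK
  haveI : Fintype K := Fintype.ofFinite K
  letI : DecidableEq K := Classical.decEq _
  letI : Field K := Fintype.fieldOfDomain K
  set d := Module.finrank (ZMod p) K with hd
  have hcardK : Fintype.card K = p ^ d := by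
    have := Module.card_eq_pow_finrank (K := ZMod p) (V := K)
    rwa [ZMod.card] at this
  -- ξ as element of K
  have hmem : ξ ∈ K := Algebra.subset_adjoin (Set.mem_singleton ξ)
  have hξ0 : ξ ≠ 0 := hξ.ne_zero hN.ne'
  have horder : orderOf ξ = N := (hξ.eq_orderOf).symm
  have horderK : orderOf (⟨ξ, hmem⟩ : K) = N := by
    rw [← horder]
    exact (orderOf_injective (SubmonoidClass.subtype K) Subtype.coe_injective ⟨ξ, hmem⟩).symm
  have hNdvd : N ∣ p ^ d - 1 := by
    rw [← horderK, ← hcardK]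
    apply orderOf_dvd_of_pow_eq_one
    exact FiniteField.pow_card_sub_one_eq_one (⟨ξ, hmem⟩ : K)
      (fun h => hξ0 (congrArg Subtype.val h))
  have hdvd : N.totient ∣ d := by
    rw [← hprim]
    apply orderOf_dvd_of_pow_eq_one
    have h1 : 1 ≤ p ^ d := Nat.one_le_pow _ _ hp.pos
    have : (p : ℕ) ^ d ≡ 1 [MOD N] := ((Nat.modEq_iff_dvd' h1).mpr hNdvd).symm
    have := (ZMod.natCast_eq_natCast_iff _ _ _).mpr this
    push_cast at this
    exact this
  have hdle : d ≤ N.totient := by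
    rw [← hfinrank]
    exact (Subalgebra.toSubmodule K).finrank_le
  have hdpos : 0 < d := Module.finrank_pos
  have hdeq : d = N.totient := le_antisymm hdle (Nat.le_of_dvd hdpos hdvd)
  -- adjoin = ⊤
  have hint : IsIntegral (ZMod p) ξ := IsIntegral.of_finite (ZMod p) ξ
  have htop : K = ⊤ := by
    rw [← Algebra.toSubmodule_eq_top]
    apply Submodule.eq_top_of_finrank_eq
    rw [hfinrank, ← hdeq]
    rfl
  -- degree of minpoly
  have hdeg : (minpoly (ZMod p) ξ).natDegree = N.totient := by
    have hb := Algebra.adjoin.powerBasisAux hint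
    have := Module.finrank_eq_card_basis hb
    rw [Fintype.card_fin] at this
    rw [← this, ← hdeq]
  -- linear independence
  have hli0 : LinearIndependent (ZMod p) fun i : Fin N.totient => ξ ^ (i : ℕ) := by
    have := linearIndependent_pow (K := ZMod p) ξ
    rwa [hdeg] at this
  have hli : LinearIndependent (ZMod p) (fun i : Fin N.totient => ξ ^ ((i : ℕ) + 1)) := by
    have hmap := hli0.map' (LinearMap.mulLeft (ZMod p) ξ)
      (LinearMap.ker_eq_bot.mpr (mul_right_injective₀ hξ0))
    convert hmap using 1
    funext i
    simp [LinearMap.mulLeft_apply, pow_succ, mul_comm]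
    all_goals rfl
  refine ⟨htop, hli, ?_⟩
  -- span = ⊤
  have hcardfin : Fintype.card (Fin N.totient) = Module.finrank (ZMod p) F := by
    rw [Fintype.card_fin, hfinrank]
  haveI : Nonempty (Fin N.totient) := ⟨⟨0, htot⟩⟩
  have := (basisOfLinearIndependentOfCardEqFinrank hli hcardfin).span_eq
  rwa [coe_basisOfLinearIndependentOfCardEqFinrank] at this
end
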